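/- arXiv:1210.6277 — 3 statements merged into one kernel-verified Lean document; each statement's English description precedes it below -/
import Mathlib

section
/- Let Δ ≥ 3 and let G be an infinite, connected, quasi-transitive, Δ-regular simple graph. Then μ(G) = Δ−1 if and only if G contains no cycle, i.e., if and only if G is the Δ-regular tree. -/
open Filter Topology

/-- The number of `n`-step self-avoiding walks in `G` starting at `v`. -/
noncomputable def sawCount {V : Type*} (G : SimpleGraph V) (v : V) (n : ℕ) : ℕ :=
  Nat.card {p : Σ u : V, G.Walk v u // p.2.IsPath ∧ p.2.length = n}

/-- The supremum over vertices of the number of `n`-step self-avoiding walks. -/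
noncomputable def sawSup {V : Type*} (G : SimpleGraph V) (n : ℕ) : ℕ :=
  sSup (Set.range fun v => sawCount G v n)

namespace SAWAux
variable {V : Type*} {G : SimpleGraph V} {Δ : ℕ}

def nbk (G : SimpleGraph V) : V → V → List V → Prop
  | _, _, [] => True
  | f, x, (w :: l) => G.Adj x w ∧ w ≠ f ∧ nbk G x w l

/-- self-avoiding walk lists -/
def SL (G : SimpleGraph V) (v : V) (n : ℕ) : Type _ :=
  {l : List V // List.Chain' G.Adj (v :: l) ∧ (v :: l).Nodup ∧ l.length = n}

/-- non-backtracking walk lists with forbidden first step -/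
def NBt (G : SimpleGraph V) (f x : V) (n : ℕ) : Type _ :=
  {l : List V // nbk G f x l ∧ l.length = n}

lemma nbr_finite (hreg : ∀ v : V, (G.neighborSet v).ncard = Δ) (hΔ : 1 ≤ Δ) (x : V) :
    (G.neighborSet x).Finite := by
  by_contra h
  have := Set.Infinite.ncard (s := G.neighborSet x) h
  have h2 := hreg x
  omega

lemma card_nbr (hreg : ∀ v : V, (G.neighborSet v).ncard = Δ) (x : V) :
    Nat.card {w : V // G.Adj x w} = Δ := by
  have : {w : V // G.Adj x w} = ↥(G.neighborSet x) := rfl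
  rw [this, Nat.card_coe_set_eq, hreg]

lemma card_nbr_erase (hreg : ∀ v : V, (G.neighborSet v).ncard = Δ) (hΔ : 1 ≤ Δ)
    {x f : V} (hf : G.Adj x f) :
    Nat.card {w : V // G.Adj x w ∧ w ≠ f} = Δ - 1 := by
  have hset : {w : V | G.Adj x w ∧ w ≠ f} = G.neighborSet x \ {f} := by
    ext w; simp [SimpleGraph.neighborSet]
  have : {w : V // G.Adj x w ∧ w ≠ f} = ↥(G.neighborSet x \ {f}) := by rw [← hset]; rfl
  rw [this, Nat.card_coe_set_eq,
    Set.ncard_diff_singleton_of_mem (show f ∈ G.neighborSet x from hf), hreg]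

lemma finite_nbr (hreg : ∀ v : V, (G.neighborSet v).ncard = Δ) (hΔ : 1 ≤ Δ) (x : V) :
    Finite {w : V // G.Adj x w} :=
  (nbr_finite hreg hΔ x).to_subtype

lemma finite_nbr_erase (hreg : ∀ v : V, (G.neighborSet v).ncard = Δ) (hΔ : 1 ≤ Δ) (x f : V) :
    Finite {w : V // G.Adj x w ∧ w ≠ f} := by
  have : {w : V | G.Adj x w ∧ w ≠ f}.Finite := (nbr_finite hreg hΔ x).subset (fun w h => h.1)
  exact this.to_subtype

@[simp] lemma nbk_nil {f x : V} : nbk G f x [] := trivial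

@[simp] lemma nbk_cons {f x w : V} {l : List V} :
    nbk G f x (w :: l) ↔ G.Adj x w ∧ w ≠ f ∧ nbk G x w l := Iff.rfl

lemma equiv_fin_of_card {α : Type*} [Finite α] {m : ℕ} (h : Nat.card α = m) :
    Nonempty (α ≃ Fin m) := by
  haveI := Fintype.ofFinite α
  exact ⟨Fintype.equivFinOfCardEq (by rw [← Nat.card_eq_fintype_card, h])⟩

/-- decomposing a nonempty non-backtracking list -/
def nbtConsEquiv (f x : V) (n : ℕ) :
    NBt G f x (n+1) ≃ (Σ w : {w : V // G.Adj x w ∧ w ≠ f}, NBt G x w n) where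
  toFun p :=
    have hne : p.1 ≠ [] := List.ne_nil_of_length_pos (by rw [p.2.2]; omega)
    have h : nbk G f x (p.1.head hne :: p.1.tail) := by
      rw [List.cons_head_tail]; exact p.2.1
    ⟨⟨p.1.head hne, h.1, h.2.1⟩, ⟨p.1.tail, h.2.2,
      by rw [List.length_tail, p.2.2]; rfl⟩⟩
  invFun z := ⟨z.1.1 :: z.2.1, ⟨z.1.2.1, z.1.2.2, z.2.2.1⟩, by
    rw [List.length_cons, z.2.2.2]⟩
  left_inv p := Subtype.ext (List.cons_head_tail _)
  right_inv z := rfl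

lemma nbt_equiv_fin (hreg : ∀ v : V, (G.neighborSet v).ncard = Δ) (hΔ : 1 ≤ Δ) :
    ∀ (n : ℕ) (x f : V), G.Adj x f → Nonempty (NBt G f x n ≃ Fin ((Δ-1)^n)) := by
  intro n
  induction n with
  | zero =>
    intro x f _
    rw [pow_zero]
    refine ⟨⟨fun _ => 0, fun _ => ⟨[], trivial, rfl⟩, fun p => ?_, fun i => ?_⟩⟩
    · exact Subtype.ext (List.length_eq_zero_iff.mp p.2.2).symm
    · exact Subsingleton.elim _ _
  | succ n ih =>
    intro x f hf
    haveI : Finite {w : V // G.Adj x w ∧ w ≠ f} := finite_nbr_erase hreg hΔ x f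
    obtain ⟨esub⟩ := equiv_fin_of_card (card_nbr_erase hreg hΔ hf)
    have echoice : ∀ w : {w : V // G.Adj x w ∧ w ≠ f}, NBt G x w n ≃ Fin ((Δ-1)^n) :=
      fun w => (ih w x w.2.1.symm).some
    exact ⟨(nbtConsEquiv f x n).trans <|
      ((Equiv.sigmaCongrRight echoice).trans <|
        ((Equiv.sigmaEquivProd _ _).trans <|
          ((esub.prodCongr (Equiv.refl _)).trans <|
            finProdFinEquiv.trans (finCongr (by rw [pow_succ, Nat.mul_comm])))))⟩


lemma walk_support_inj {v : V} : ∀ {u u' : V} (p : G.Walk v u) (q : G.Walk v u'),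
    p.support = q.support → (⟨u, p⟩ : Σ u, G.Walk v u) = ⟨u', q⟩ := by
  intro u u' p q h
  induction p with
  | nil =>
    cases q with
    | nil => rfl
    | cons h' q' =>
      exfalso
      have := congrArg List.length h
      simp [SimpleGraph.Walk.support_cons, SimpleGraph.Walk.length_support] at this
  | cons hadj p' ih =>
    cases q with
    | nil =>
      exfalso
      have := congrArg List.length h
      simp [SimpleGraph.Walk.support_cons, SimpleGraph.Walk.length_support] at this
    | cons hadj' q' =>
      simp only [SimpleGraph.Walk.support_cons, List.cons.injEq, true_and] at h
      have hw := congrArg List.head? h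
      rw [SimpleGraph.Walk.support_eq_cons p', SimpleGraph.Walk.support_eq_cons q',
        List.head?_cons, List.head?_cons, Option.some.injEq] at hw
      subst hw
      obtain ⟨rfl, hpq⟩ := Sigma.mk.inj_iff.mp (ih q' h)
      rw [heq_iff_eq] at hpq
      subst hpq
      rfl

lemma exists_walk_of_chain : ∀ (l : List V) (v : V), List.Chain' G.Adj (v :: l) →
    ∃ (u : V) (p : G.Walk v u), p.support = v :: l
  | [], v, _ => ⟨v, SimpleGraph.Walk.nil, rfl⟩
  | w :: l, v, hc => by
    simp only [List.Chain'] at hc; rw [List.isChain_cons_cons] at hc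
    obtain ⟨u, p, hp⟩ := exists_walk_of_chain l w hc.2
    exact ⟨u, SimpleGraph.Walk.cons hc.1 p, by rw [SimpleGraph.Walk.support_cons, hp]⟩


lemma nbk_of_nodup : ∀ (l : List V) (x f : V), List.Chain' G.Adj (x :: l) →
    (x :: l).Nodup → f ∉ l → nbk G f x l
  | [], _, _, _, _, _ => trivial
  | w :: l, x, f, hc, hn, hf => by
    simp only [List.Chain'] at hc; rw [List.isChain_cons_cons] at hc
    refine ⟨hc.1, fun h => hf (h ▸ List.mem_cons_self), ?_⟩
    exact nbk_of_nodup l w x hc.2 hn.of_cons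
      (fun h => (List.nodup_cons.mp hn).1 (List.mem_cons_of_mem _ h))

lemma chain'_of_nbk : ∀ (l : List V) (x f : V), nbk G f x l → List.Chain' G.Adj (x :: l)
  | [], _, _, _ => List.isChain_singleton _
  | w :: l, x, _, h => List.isChain_cons_cons.mpr ⟨h.1, chain'_of_nbk l w x h.2.2⟩

/-- last two entries of `f :: x :: l`, as (second-to-last, last). -/
def lastTwo : V → V → List V → V × V
  | f, x, [] => (f, x)
  | _, x, (w :: l) => lastTwo x w l

@[simp] lemma lastTwo_nil {f x : V} : lastTwo f x ([] : List V) = (f, x) := rfl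
@[simp] lemma lastTwo_cons {f x w : V} {l : List V} : lastTwo f x (w :: l) = lastTwo x w l := rfl

lemma lastTwo_snd : ∀ (l : List V) (x f : V),
    (lastTwo f x l).2 = (x :: l).getLast (List.cons_ne_nil _ _)
  | [], _, _ => rfl
  | w :: l, x, f => by
    rw [lastTwo_cons, lastTwo_snd l w x, List.getLast_cons (List.cons_ne_nil _ _)]

lemma nbk_append : ∀ (l₁ : List V) (x f : V) (l₂ : List V), nbk G f x l₁ →
    nbk G (lastTwo f x l₁).1 (lastTwo f x l₁).2 l₂ → nbk G f x (l₁ ++ l₂)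
  | [], _, _, _, _, h₂ => h₂
  | w :: l₁, x, _, l₂, h₁, h₂ =>
    ⟨h₁.1, h₁.2.1, nbk_append l₁ w x l₂ h₁.2.2 h₂⟩

lemma nbk_dropLast : ∀ (l : List V) (x f : V), nbk G f x l → nbk G f x l.dropLast
  | [], _, _, _ => trivial
  | [_], _, _, _ => trivial
  | w :: w' :: l, x, _, h => ⟨h.1, h.2.1, nbk_dropLast (w' :: l) w x h.2.2⟩

lemma lastTwo_dropLast : ∀ (l : List V) (x f : V) (_ : l ≠ []),
    (lastTwo f x l.dropLast).2 = (lastTwo f x l).1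
  | [], _, _, h => absurd rfl h
  | [_], _, _, _ => rfl
  | w :: w' :: l, x, _, _ => lastTwo_dropLast (w' :: l) w x (List.cons_ne_nil _ _)

lemma finite_nbt (hreg : ∀ v : V, (G.neighborSet v).ncard = Δ) (hΔ : 1 ≤ Δ)
    {x f : V} (hadj : G.Adj x f) (n : ℕ) : Finite (NBt G f x n) :=
  Finite.of_equiv _ ((nbt_equiv_fin hreg hΔ n x f hadj).some).symm

lemma card_nbt (hreg : ∀ v : V, (G.neighborSet v).ncard = Δ) (hΔ : 1 ≤ Δ)
    {x f : V} (hadj : G.Adj x f) (n : ℕ) : Nat.card (NBt G f x n) = (Δ-1)^n := by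
  rw [Nat.card_congr (nbt_equiv_fin hreg hΔ n x f hadj).some, Nat.card_eq_fintype_card,
    Fintype.card_fin]

/-- the sigma type of non-backtracking walks of length n+1 from x -/
lemma card_sigma_nbt (hreg : ∀ v : V, (G.neighborSet v).ncard = Δ) (hΔ : 1 ≤ Δ) (x : V) (n : ℕ) :
    Nat.card (Σ w : {w : V // G.Adj x w}, NBt G x w n) = Δ * (Δ-1)^n ∧
    Finite (Σ w : {w : V // G.Adj x w}, NBt G x w n) := by
  haveI : Finite {w : V // G.Adj x w} := finite_nbr hreg hΔ x
  haveI : ∀ w : {w : V // G.Adj x w}, Finite (NBt G x w n) :=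
    fun w => finite_nbt hreg hΔ w.2.symm n
  have e : (Σ w : {w : V // G.Adj x w}, NBt G x w n) ≃ {w : V // G.Adj x w} × Fin ((Δ-1)^n) :=
    (Equiv.sigmaCongrRight (fun (w : {w : V // G.Adj x w}) => (nbt_equiv_fin hreg hΔ n w.1 x w.2.symm).some)).trans
      (Equiv.sigmaEquivProd _ _)
  constructor
  · rw [Nat.card_congr e, Nat.card_prod, card_nbr hreg, Nat.card_eq_fintype_card,
      Fintype.card_fin]
  · exact Finite.of_equiv _ e.symm

/-- dropping the first step of a self-avoiding list -/
def slConsMap (v : V) (n : ℕ) :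
    SL G v (n+1) → Σ w : {w : V // G.Adj v w}, NBt G v w n := fun p =>
  have hne : p.1 ≠ [] := List.ne_nil_of_length_pos (by rw [p.2.2.2]; omega)
  have hc : List.Chain' G.Adj (v :: p.1.head hne :: p.1.tail) := by
    rw [List.cons_head_tail]; exact p.2.1
  have hn : (v :: p.1.head hne :: p.1.tail).Nodup := by
    rw [List.cons_head_tail]; exact p.2.2.1
  ⟨⟨p.1.head hne, (List.isChain_cons_cons.mp hc).1⟩,
    ⟨p.1.tail, nbk_of_nodup _ _ _ (List.isChain_cons_cons.mp hc).2 hn.of_cons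
      (fun h => (List.nodup_cons.mp hn).1 (List.mem_cons_of_mem _ h)),
     by rw [List.length_tail, p.2.2.2]; rfl⟩⟩

lemma slConsMap_injective (v : V) (n : ℕ) : Function.Injective (slConsMap (G := G) v n) := by
  intro p q h
  apply Subtype.ext
  have key : ∀ r : SL G v (n+1),
      ((slConsMap v n r).1.1 :: (slConsMap v n r).2.1 : List V) = r.1 :=
    fun r => List.cons_head_tail _
  rw [← key p, ← key q, h]

lemma finite_sl (hreg : ∀ v : V, (G.neighborSet v).ncard = Δ) (hΔ : 1 ≤ Δ) (v : V) (n : ℕ) :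
    Finite (SL G v n) := by
  cases n with
  | zero =>
    haveI : Subsingleton (SL G v 0) := ⟨fun p q => Subtype.ext (by
      rw [List.length_eq_zero_iff.mp p.2.2.2, List.length_eq_zero_iff.mp q.2.2.2])⟩
    infer_instance
  | succ n =>
    haveI := (card_sigma_nbt hreg hΔ v n).2
    exact Finite.of_injective _ (slConsMap_injective v n)

lemma card_sl_zero (v : V) : Nat.card (SL G v 0) = 1 := by
  haveI : Unique (SL G v 0) :=
    { default := ⟨[], List.isChain_singleton _, List.nodup_singleton _, rfl⟩
      uniq := fun p => Subtype.ext (List.length_eq_zero_iff.mp p.2.2.2) }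
  exact Nat.card_unique

lemma card_sl_le (hreg : ∀ v : V, (G.neighborSet v).ncard = Δ) (hΔ : 1 ≤ Δ) (v : V) (n : ℕ) :
    Nat.card (SL G v (n+1)) ≤ Δ * (Δ-1)^n := by
  obtain ⟨hcard, hfin⟩ := card_sigma_nbt hreg hΔ v n
  haveI := hfin
  rw [← hcard]
  exact Nat.card_le_card_of_injective _ (slConsMap_injective v n)

lemma card_saw_eq_card_sl (v : V) (n : ℕ) :
    Nat.card {p : Σ u : V, G.Walk v u // p.2.IsPath ∧ p.2.length = n} = Nat.card (SL G v n) := by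
  refine Nat.card_congr (Equiv.ofBijective (fun p => ⟨p.1.2.support.tail, ?_, ?_, ?_⟩) ⟨?_, ?_⟩)
  · rw [← SimpleGraph.Walk.support_eq_cons]; exact p.1.2.isChain_adj_support
  · rw [← SimpleGraph.Walk.support_eq_cons]; exact (SimpleGraph.Walk.isPath_def _).mp p.2.1
  · have := p.1.2.length_support
    rw [SimpleGraph.Walk.support_eq_cons p.1.2] at this
    simp only [List.length_cons] at this
    have h2 := p.2.2
    omega
  · intro p q h
    have hsup : p.1.2.support = q.1.2.support := by
      rw [SimpleGraph.Walk.support_eq_cons p.1.2, SimpleGraph.Walk.support_eq_cons q.1.2]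
      exact congrArg (List.cons v) (congrArg Subtype.val h)
    exact Subtype.ext (walk_support_inj _ _ hsup)
  · rintro ⟨l, hc, hn, hl⟩
    obtain ⟨u, p, hp⟩ := exists_walk_of_chain l v hc
    refine ⟨⟨⟨u, p⟩, (SimpleGraph.Walk.isPath_def _).mpr (hp ▸ hn), ?_⟩, ?_⟩
    · show p.length = n
      have := p.length_support
      rw [hp] at this
      simp only [List.length_cons, hl] at this
      omega
    · exact Subtype.ext (by simp only [hp, List.tail_cons])

lemma key_acyclic (hG : G.IsAcyclic) :
    ∀ (l : List V) (x f : V), G.Adj f x → nbk G f x l → (f :: x :: l).Nodup := by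
  intro l
  induction l with
  | nil => intro x f hadj _; simp [hadj.ne]
  | cons w l ih =>
    intro x f hadj h
    obtain ⟨hxw, hwf, hnb⟩ := h
    have hxwl : (x :: w :: l).Nodup := ih w x hxw hnb
    rw [List.nodup_cons]
    refine ⟨?_, hxwl⟩
    intro hmem
    rcases List.mem_cons.mp hmem with h1 | hf
    · exact hadj.ne h1
    rcases List.mem_cons.mp hf with h2 | hf
    · exact hwf h2.symm
    -- f ∈ l : build two distinct paths from x to f
    obtain ⟨l₁, l₂, rfl⟩ := List.append_of_mem hf
    have hpre : (x :: w :: l₁ ++ [f]) <+: (x :: w :: (l₁ ++ f :: l₂)) :=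
      ⟨l₂, by simp⟩
    have hchain : List.Chain' G.Adj (x :: w :: l₁ ++ [f]) :=
      (chain'_of_nbk (w :: (l₁ ++ f :: l₂)) x f (nbk_cons.mpr ⟨hxw, hwf, hnb⟩)).prefix hpre
    have hnodup : (x :: w :: l₁ ++ [f]).Nodup := hxwl.sublist hpre.sublist
    obtain ⟨u, p, hp⟩ := exists_walk_of_chain (w :: l₁ ++ [f]) x (by exact hchain)
    have hu : u = f := by
      have h1 : p.support.getLast? = some u := by
        rw [List.getLast?_eq_getLast p.support_ne_nil, p.getLast_support]
      rw [hp] at h1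
      have h2 : (x :: (w :: l₁ ++ [f])).getLast? = some f := by
        have he : (x :: (w :: l₁ ++ [f])) = (x :: w :: l₁) ++ [f] := by simp
        rw [he, List.getLast?_concat]
      rw [h1] at h2
      exact (Option.some.injEq _ _).mp h2
    cases hu
    have hpath : p.IsPath := (SimpleGraph.Walk.isPath_def _).mpr (hp ▸ hnodup)
    have hq : (SimpleGraph.Walk.cons hadj.symm SimpleGraph.Walk.nil : G.Walk x f).IsPath := by
      rw [SimpleGraph.Walk.isPath_def]
      simp [SimpleGraph.Walk.support_cons, hadj.ne']
    have hpq := SimpleGraph.isAcyclic_iff_path_unique.mp hG ⟨p, hpath⟩ ⟨_, hq⟩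
    have hlen : p.length = 1 := by
      have := congrArg (fun q : G.Path x f => q.1.length) hpq
      simpa using this
    have hl1 : p.length + 1 = l₁.length + 3 := by
      have hls := p.length_support
      rw [hp] at hls
      simp at hls
      omega
    omega

lemma slConsMap_surjective (hG : G.IsAcyclic) (v : V) (n : ℕ) :
    Function.Surjective (slConsMap (G := G) v n) := by
  rintro ⟨⟨w, hw⟩, ⟨l, hnb, hlen⟩⟩
  have hnd : (v :: w :: l).Nodup := key_acyclic hG l w v hw hnb
  refine ⟨⟨w :: l, ?_, hnd, by simp [hlen]⟩, rfl⟩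
  · exact List.isChain_cons_cons.mpr ⟨hw, chain'_of_nbk l w v hnb⟩

lemma card_sl_acyclic (hG : G.IsAcyclic) (hreg : ∀ v : V, (G.neighborSet v).ncard = Δ)
    (hΔ : 1 ≤ Δ) (v : V) (n : ℕ) :
    Nat.card (SL G v (n+1)) = Δ * (Δ-1)^n := by
  rw [Nat.card_congr (Equiv.ofBijective _
    ⟨slConsMap_injective v n, slConsMap_surjective hG v n⟩)]
  exact (card_sigma_nbt hreg hΔ v n).1

/-- usable continuations: non-backtracking, self-avoiding including the start -/
def US (G : SimpleGraph V) (f x : V) (n : ℕ) : Type _ :=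
  {l : List V // nbk G f x l ∧ (x :: l).Nodup ∧ l.length = n}

lemma finite_us (hreg : ∀ v : V, (G.neighborSet v).ncard = Δ) (hΔ : 1 ≤ Δ)
    {x f : V} (hadj : G.Adj x f) (n : ℕ) : Finite (US G f x n) := by
  haveI : Finite {l : List V // nbk G f x l ∧ l.length = n} := finite_nbt hreg hΔ hadj n
  exact Finite.of_injective (fun a : US G f x n => (⟨a.1, a.2.1, a.2.2.2⟩ : NBt G f x n))
    (fun a b h => Subtype.ext (congrArg (fun z : NBt G f x n => z.1) h))

lemma emb_of_card_le {α : Type*} [Finite α] {m : ℕ} (h : Nat.card α ≤ m) :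
    Nonempty (α ↪ Fin m) := by
  haveI := Fintype.ofFinite α
  rw [Nat.card_eq_fintype_card] at h
  exact Function.Embedding.nonempty_of_card_le (by simpa using h)

lemma chain'_lastTwo : ∀ (l : List V) (x f₀ : V), List.Chain' G.Adj (x :: l) → l ≠ [] →
    G.Adj (lastTwo f₀ x l).1 (lastTwo f₀ x l).2
  | [], _, _, _, h => absurd rfl h
  | [w], x, f₀, hc, _ => by simpa using (List.isChain_cons_cons.mp hc).1
  | w :: w' :: l, x, f₀, hc, _ =>
      chain'_lastTwo (w' :: l) w x (List.isChain_cons_cons.mp hc).2 (List.cons_ne_nil _ _)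

lemma lastTwo_fst_mem : ∀ (l : List V) (x f₀ : V), l ≠ [] → (lastTwo f₀ x l).1 ∈ x :: l
  | [], _, _, h => absurd rfl h
  | [w], x, f₀, _ => by simp
  | w :: w' :: l, x, f₀, _ => by
    have := lastTwo_fst_mem (w' :: l) w x (List.cons_ne_nil _ _)
    simp only [lastTwo_cons]
    exact List.mem_cons_of_mem _ this

lemma prod_sigma_inj {ι : Type*} {β : ι → Type*} {γ : Type*} (e : ∀ i, β i ↪ γ) :
    Function.Injective (fun z : Σ i, β i => (z.1, e z.1 z.2)) := by
  rintro ⟨i, b⟩ ⟨j, c⟩ h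
  obtain ⟨h1, h2⟩ := Prod.mk.injEq .. |>.mp h
  subst h1
  exact Sigma.ext rfl (heq_of_eq ((e i).injective h2))

lemma card_split (hreg : ∀ v : V, (G.neighborSet v).ncard = Δ) (hΔ : 1 ≤ Δ)
    (v : V) (t s C : ℕ) (ht : 1 ≤ t)
    (hC : ∀ x f : V, G.Adj x f → Nat.card (US G f x s) ≤ C) :
    Nat.card (SL G v (t+s)) ≤ Nat.card (SL G v t) * C := by
  classical
  have hrne : ∀ r : SL G v t, r.1 ≠ [] := fun r =>
    List.ne_nil_of_length_pos (by rw [r.2.2.2]; omega)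
  set up : SL G v t → V := fun r => (lastTwo v v r.1).2 with hup
  set fp : SL G v t → V := fun r => (lastTwo v v r.1).1 with hfp
  have hadj : ∀ r : SL G v t, G.Adj (up r) (fp r) :=
    fun r => (chain'_lastTwo r.1 v v r.2.1 (hrne r)).symm
  have emb : ∀ r : SL G v t, US G (fp r) (up r) s ↪ Fin C := by
    intro r
    haveI := finite_us hreg hΔ (hadj r) s
    exact (emb_of_card_le (hC _ _ (hadj r))).some
  -- construct the splitting map into the sigma type
  have F : ∀ p : SL G v (t+s),
      {z : Σ r : SL G v t, US G (fp r) (up r) s // z.1.1 ++ z.2.1 = p.1} := by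
    intro p
    obtain ⟨l, hc, hn, hl⟩ := p
    have hdec : (v :: l) = (v :: l.take t) ++ l.drop t := by
      rw [List.cons_append, List.take_append_drop]
    have hctake : List.Chain' G.Adj (v :: l.take t) := by
      have := hc.take (t+1)
      rwa [List.take_succ_cons] at this
    have hntake : (v :: l.take t).Nodup :=
      hn.sublist (List.cons_sublist_cons.2 (l.take_sublist t))
    have hltake : (l.take t).length = t := by
      rw [List.length_take]; omega
    -- properties of the tail part
    have htne : l.take t ≠ [] := List.ne_nil_of_length_pos (by rw [hltake]; omega)
    have hu : (lastTwo v v (l.take t)).2 = (v :: l.take t).getLast (List.cons_ne_nil _ _) :=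
      lastTwo_snd _ _ _
    have humem : (lastTwo v v (l.take t)).2 ∈ (v :: l.take t) := by
      rw [hu]; exact List.getLast_mem _
    have hfmem : (lastTwo v v (l.take t)).1 ∈ (v :: l.take t) :=
      lastTwo_fst_mem _ _ _ htne
    have hnapp : ((v :: l.take t) ++ l.drop t).Nodup := hdec ▸ hn
    rw [List.nodup_append'] at hnapp
    have hcapp : List.Chain' G.Adj ((v :: l.take t) ++ l.drop t) := hdec ▸ hc
    simp only [List.Chain'] at hcapp; rw [List.isChain_append] at hcapp
    have hchain2 : List.Chain' G.Adj ((lastTwo v v (l.take t)).2 :: l.drop t) := by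
      cases hdrop : l.drop t with
      | nil => exact List.isChain_singleton _
      | cons b l₂ =>
        refine List.isChain_cons_cons.mpr ⟨?_, by rw [hdrop] at hcapp; exact hcapp.2.1⟩
        refine hcapp.2.2 _ ?_ b ?_
        · rw [List.getLast?_eq_getLast (List.cons_ne_nil _ _), ← hu]; rfl
        · rw [hdrop]; rfl
    have hnd2 : ((lastTwo v v (l.take t)).2 :: l.drop t).Nodup := by
      rw [List.nodup_cons]
      exact ⟨fun hmem => hnapp.2.2 humem hmem, hnapp.2.1⟩
    have hfnot : (lastTwo v v (l.take t)).1 ∉ l.drop t :=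
      fun hmem => hnapp.2.2 hfmem hmem
    exact ⟨⟨⟨l.take t, hctake, hntake, hltake⟩,
      ⟨l.drop t, nbk_of_nodup _ _ _ hchain2 hnd2 hfnot, hnd2, by rw [List.length_drop]; omega⟩⟩,
      List.take_append_drop t l⟩
  have hFinj : Function.Injective (fun p => (F p).1) := by
    intro p q h
    apply Subtype.ext
    rw [← (F p).2, ← (F q).2]
    simp only at h
    rw [h]
  haveI : Finite (SL G v t) := finite_sl hreg hΔ v t
  have hinj : Function.Injective
      ((fun z : Σ r : SL G v t, US G (fp r) (up r) s => (z.1, emb z.1 z.2)) ∘ (fun p => (F p).1)) :=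
    (prod_sigma_inj emb).comp hFinj
  calc Nat.card (SL G v (t+s)) ≤ Nat.card (SL G v t × Fin C) :=
        Nat.card_le_card_of_injective _ hinj
    _ = Nat.card (SL G v t) * C := by
        rw [Nat.card_prod, Nat.card_eq_fintype_card (α := Fin C), Fintype.card_fin]

lemma nbk_of_nodup' : ∀ (l : List V) (x f : V), List.Chain' G.Adj (x :: l) →
    (x :: l).Nodup → l.head? ≠ some f → nbk G f x l
  | [], _, _, _, _, _ => trivial
  | w :: l, x, f, hc, hn, hf => by
    simp only [List.Chain'] at hc; rw [List.isChain_cons_cons] at hc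
    refine ⟨hc.1, fun h => hf (by rw [List.head?_cons, h]), ?_⟩
    exact nbk_of_nodup l w x hc.2 hn.of_cons
      (fun h => (List.nodup_cons.mp hn).1 (List.mem_cons_of_mem _ h))

lemma lastTwo_fst_mem_strong : ∀ (l : List V) (x f₀ : V), 2 ≤ l.length →
    (lastTwo f₀ x l).1 ∈ l
  | [], _, _, h => by simp at h
  | [w], _, _, h => by simp at h
  | [w, w'], x, f₀, _ => by simp
  | w :: w' :: w'' :: l, x, f₀, _ => by
    simp only [lastTwo_cons]
    exact List.mem_cons_of_mem _
      (lastTwo_fst_mem_strong (w' :: w'' :: l) w x (by simp))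

lemma card_us_lt (hreg : ∀ v : V, (G.neighborSet v).ncard = Δ) (hΔ : 1 ≤ Δ)
    {x f : V} (hadj : G.Adj x f) (s : ℕ)
    (hbad : ∃ l, nbk G f x l ∧ l.length = s ∧ ¬(x :: l).Nodup) :
    Nat.card (US G f x s) ≤ (Δ-1)^s - 1 := by
  classical
  obtain ⟨b, hb1, hb2, hb3⟩ := hbad
  haveI hf1 : Finite (NBt G f x s) := finite_nbt hreg hΔ hadj s
  haveI hf2 : Finite (US G f x s) := finite_us hreg hΔ hadj s
  haveI := Fintype.ofFinite (NBt G f x s)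
  haveI := Fintype.ofFinite (US G f x s)
  have hlt : Nat.card (US G f x s) < Nat.card (NBt G f x s) := by
    rw [Nat.card_eq_fintype_card, Nat.card_eq_fintype_card]
    refine Fintype.card_lt_of_injective_of_notMem
      (fun a : US G f x s => (⟨a.1, a.2.1, a.2.2.2⟩ : NBt G f x s))
      (fun a b h => Subtype.ext (congrArg (fun z : NBt G f x s => z.1) h))
      (b := ⟨b, hb1, hb2⟩) ?_
    rintro ⟨a, ha⟩
    apply hb3
    have : a.1 = b := congrArg (fun z : NBt G f x s => z.1) ha
    rw [← this]
    exact a.2.2.1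
  rw [card_nbt hreg hΔ hadj s] at hlt
  omega

lemma card_sl_windows (hreg : ∀ v : V, (G.neighborSet v).ncard = Δ) (hΔ : 1 ≤ Δ)
    (s c : ℕ)
    (hUS : ∀ x f : V, G.Adj x f → Nat.card (US G f x s) ≤ c) :
    ∀ (k : ℕ) (v : V), Nat.card (SL G v (1 + k*s)) ≤ Δ * c^k := by
  intro k
  induction k with
  | zero => intro v; simpa using card_sl_le hreg hΔ v 0
  | succ k ih =>
    intro v
    have h1 : 1 + (k+1)*s = (1 + k*s) + s := by ring
    rw [h1]
    calc Nat.card (SL G v ((1 + k*s) + s)) ≤ Nat.card (SL G v (1 + k*s)) * c :=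
          card_split hreg hΔ v (1+k*s) s c (by omega) hUS
      _ ≤ (Δ * c^k) * c := Nat.mul_le_mul_right c (ih v)
      _ = Δ * c^(k+1) := by ring

lemma loopd (a : List V) (y f : V) (hnd : (y :: a).Nodup)
    (hch : List.Chain' G.Adj ((y :: a) ++ [y])) (hlen : 2 ≤ a.length)
    (hhead : a.head? ≠ some f) : nbk G f y (a ++ [y]) := by
  have hane : a ≠ [] := by intro h; rw [h] at hlen; simp at hlen
  have hcha : List.Chain' G.Adj (y :: a) := hch.prefix ⟨[y], rfl⟩
  have h1 : nbk G f y a := nbk_of_nodup' a y f hcha hnd hhead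
  refine nbk_append a y f [y] h1 ?_
  rw [nbk_cons]
  refine ⟨?_, ?_, trivial⟩
  · rw [lastTwo_snd]
    have h2 := (List.isChain_append.mp hch).2.2
    exact h2 _ (by rw [List.getLast?_eq_getLast (List.cons_ne_nil _ _)]; rfl) y rfl
  · have hm : (lastTwo f y a).1 ∈ a := lastTwo_fst_mem_strong a y f hlen
    intro h; rw [← h] at hm; exact (List.nodup_cons.mp hnd).1 hm

lemma getLast?_cons_of_ne_nil {α : Type*} {a : α} {l : List α} (h : l ≠ []) :
    (a :: l).getLast? = l.getLast? := by
  rw [List.getLast?_eq_getLast (List.cons_ne_nil _ _), List.getLast_cons h,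
    List.getLast?_eq_getLast h]

lemma loop_at {L : ℕ} (hL : 3 ≤ L) {y : V} (d : G.Walk y y) (hd : d.IsCycle)
    (hdl : d.length = L) (f : V) :
    ∃ l, nbk G f y l ∧ l.length = L ∧ y ∈ l := by
  classical
  have hsup : d.support = y :: d.support.tail := d.support_eq_cons
  set t := d.support.tail with ht
  have htlen : t.length = L := by
    have h1 := d.length_support
    rw [hsup] at h1
    simp only [List.length_cons] at h1
    omega
  have htne : t ≠ [] := by
    intro h; rw [h] at htlen; simp at htlen; omega
  have hgl : t.getLast htne = y := by
    have h1 : d.support.getLast? = some y := by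
      rw [List.getLast?_eq_getLast d.support_ne_nil, d.getLast_support]
    rw [hsup, getLast?_cons_of_ne_nil htne, List.getLast?_eq_getLast htne] at h1
    exact (Option.some.injEq _ _).mp h1
  obtain ⟨a, ha⟩ : ∃ a, t.dropLast = a := ⟨_, rfl⟩
  have hta : t = a ++ [y] := by
    conv_lhs => rw [← List.dropLast_append_getLast htne]
    rw [hgl, ha]
  have halen : a.length = L - 1 := by rw [← ha, List.length_dropLast, htlen]
  have hndt : t.Nodup := hd.support_nodup
  have hnd : (y :: a).Nodup := by
    rw [hta, List.nodup_append'] at hndt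
    exact List.nodup_cons.mpr ⟨fun hy => hndt.2.2 hy (by simp), hndt.1⟩
  have hch : List.Chain' G.Adj ((y :: a) ++ [y]) := by
    have h1 := d.isChain_adj_support
    rw [hsup, hta] at h1
    exact h1
  have hlen2 : 2 ≤ a.length := by omega
  by_cases hf : a.head? = some f
  · refine ⟨a.reverse ++ [y], loopd a.reverse y f ?_ ?_ ?_ ?_, by simp; omega, by simp⟩
    · rw [List.nodup_cons, List.mem_reverse, List.nodup_reverse]
      exact ⟨(List.nodup_cons.mp hnd).1, (List.nodup_cons.mp hnd).2⟩
    · have he : ((y :: a) ++ [y]).reverse = (y :: a.reverse) ++ [y] := by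
        simp [List.reverse_append]
      have h2 : List.Chain' G.Adj (((y :: a) ++ [y]).reverse) :=
        List.isChain_reverse.mpr (hch.imp fun _ _ h => h.symm)
      rwa [he] at h2
    · rw [List.length_reverse]; exact hlen2
    · rw [List.head?_reverse]
      obtain ⟨a', rfl⟩ : ∃ a', a = f :: a' := by
        cases a with
        | nil => simp at hf
        | cons w a' => exact ⟨a', by rw [List.head?_cons] at hf; rw [(Option.some.injEq _ _).mp hf]⟩
      have ha'ne : a' ≠ [] := by
        intro h; rw [h] at hlen2; simp at hlen2
      rw [List.getLast?_eq_getLast (List.cons_ne_nil _ _), List.getLast_cons ha'ne]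
      intro hcon
      have : a'.getLast ha'ne ∈ a' := List.getLast_mem _
      rw [(Option.some.injEq _ _).mp hcon] at this
      exact (List.nodup_cons.mp (List.nodup_cons.mp hnd).2).1 this
  · exact ⟨a ++ [y], loopd a y f hnd hch hlen2 hf, by simp; omega, by simp⟩

lemma ext_nbk (hreg : ∀ v : V, (G.neighborSet v).ncard = Δ) (hΔ : 2 ≤ Δ) :
    ∀ (n : ℕ) (l : List V) (x f : V), G.Adj x f → nbk G f x l → l.length ≤ n →
    ∃ l', nbk G f x l' ∧ l'.length = n ∧ l <+: l' := by
  intro n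
  induction n with
  | zero =>
    intro l x f _ hnb hlen
    have : l = [] := List.length_eq_zero_iff.mp (by omega)
    exact ⟨[], trivial, rfl, by rw [this]⟩
  | succ n ih =>
    intro l x f hadj hnb hlen
    by_cases h : l.length = n + 1
    · exact ⟨l, hnb, h, List.prefix_refl _⟩
    · obtain ⟨l', h1, h2, h3⟩ := ih l x f hadj hnb (by omega)
      -- extend l' by one step
      have hadj2 : G.Adj (lastTwo f x l').2 (lastTwo f x l').1 := by
        rcases l' with _ | ⟨b, m⟩
        · exact hadj
        · exact (chain'_lastTwo (b :: m) x f (chain'_of_nbk (b :: m) x f h1) (by simp)).symm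
      have hne2 : Nonempty {w : V // G.Adj (lastTwo f x l').2 w ∧ w ≠ (lastTwo f x l').1} := by
        by_contra hcon
        rw [not_nonempty_iff] at hcon
        have h0 := Nat.card_of_isEmpty
          (α := {w : V // G.Adj (lastTwo f x l').2 w ∧ w ≠ (lastTwo f x l').1})
        rw [card_nbr_erase hreg (by omega) hadj2] at h0
        omega
      obtain ⟨z, hz⟩ := hne2
      refine ⟨l' ++ [z], nbk_append l' x f [z] h1 ⟨hz.1, hz.2, trivial⟩, by simp [h2], ?_⟩
      exact h3.trans (List.prefix_append _ _)

lemma lastTwo_snd_mem (l : List V) (x f : V) : (lastTwo f x l).2 ∈ x :: l := by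
  rw [lastTwo_snd]
  exact List.getLast_mem _

lemma rec_bad (CC : Set V) (L : ℕ)
    (hloop : ∀ y ∈ CC, ∀ f, ∃ l, nbk G f y l ∧ l.length = L ∧ y ∈ l) :
    ∀ (q l : List V) (x f : V), nbk G f x l → q.length ≤ l.length →
    List.Chain' G.Adj ((lastTwo f x l).2 :: q) → ((lastTwo f x l).2 :: q).Nodup →
    ((lastTwo f x l).2 :: q).getLast (List.cons_ne_nil _ _) ∈ CC →
    ∃ l', nbk G f x l' ∧ ¬(x :: l').Nodup ∧ l'.length ≤ l.length + q.length + L := by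
  intro q
  induction q with
  | nil =>
    intro l x f hnb _ _ _ hC
    obtain ⟨loop, hlp1, hlp2, hlp3⟩ := hloop _ (by simpa using hC) (lastTwo f x l).1
    refine ⟨l ++ loop, nbk_append l x f loop hnb hlp1, ?_, by simp [hlp2]⟩
    intro hdup
    rw [show x :: (l ++ loop) = (x :: l) ++ loop from by simp, List.nodup_append'] at hdup
    exact hdup.2.2 (lastTwo_snd_mem l x f) hlp3
  | cons b q' ih =>
    intro l x f hnb hql hch hnd hC
    by_cases hb : b = (lastTwo f x l).1
    · -- strip the last vertex of l
      have hlne : l ≠ [] := by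
        intro h
        rw [h] at hql
        simp at hql
      have h1 : nbk G f x l.dropLast := nbk_dropLast l x f hnb
      have h2 : q'.length ≤ l.dropLast.length := by
        rw [List.length_dropLast]
        have hl1 : 1 ≤ l.length := List.length_pos_iff.mpr hlne
        simp only [List.length_cons] at hql
        omega
      have hl2 : (lastTwo f x l.dropLast).2 = b := by
        rw [lastTwo_dropLast l x f hlne, ← hb]
      have h3 : List.Chain' G.Adj ((lastTwo f x l.dropLast).2 :: q') := by
        rw [hl2]; exact hch.tail
      have h4 : ((lastTwo f x l.dropLast).2 :: q').Nodup := by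
        rw [hl2]; exact hnd.of_cons
      have h5 : ((lastTwo f x l.dropLast).2 :: q').getLast (List.cons_ne_nil _ _) ∈ CC := by
        have he : ((lastTwo f x l).2 :: b :: q').getLast (List.cons_ne_nil _ _)
            = ((lastTwo f x l.dropLast).2 :: q').getLast (List.cons_ne_nil _ _) := by
          rw [hl2]
          exact List.getLast_cons (List.cons_ne_nil _ _)
        rw [← he]
        exact hC
      obtain ⟨l', h6, h7, h8⟩ := ih l.dropLast x f h1 h2 h3 h4 h5
      refine ⟨l', h6, h7, ?_⟩
      rw [List.length_dropLast] at h8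
      have hl1 : 1 ≤ l.length := List.length_pos_iff.mpr hlne
      simp only [List.length_cons] at *
      omega
    · -- attach the path and loop here
      have hq : nbk G (lastTwo f x l).1 (lastTwo f x l).2 (b :: q') :=
        nbk_of_nodup' (b :: q') _ _ hch hnd
          (by rw [List.head?_cons]; exact fun hcon => hb ((Option.some.injEq _ _).mp hcon))
      obtain ⟨loop, hlp1, hlp2, hlp3⟩ := hloop
        ((lastTwo (lastTwo f x l).1 (lastTwo f x l).2 (b :: q')).2)
        (by rw [lastTwo_snd (b :: q') ((lastTwo f x l).2) ((lastTwo f x l).1)]; exact hC)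
        ((lastTwo (lastTwo f x l).1 (lastTwo f x l).2 (b :: q')).1)
      refine ⟨l ++ ((b :: q') ++ loop),
        nbk_append l x f _ hnb (nbk_append (b :: q') _ _ loop hq hlp1), ?_, by simp [hlp2]; ring_nf; omega⟩
      intro hdup
      rw [show x :: (l ++ ((b :: q') ++ loop)) = (x :: (l ++ (b :: q'))) ++ loop from by simp,
        List.nodup_append'] at hdup
      refine hdup.2.2 ?_ hlp3
      -- the looped vertex lies in x :: l ++ (b :: q')
      have hz : (lastTwo (lastTwo f x l).1 (lastTwo f x l).2 (b :: q')).2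
          ∈ (lastTwo f x l).2 :: (b :: q') :=
        lastTwo_snd_mem (b :: q') _ _
      rcases List.mem_cons.mp hz with h | h
      · have : (lastTwo f x l).2 ∈ x :: l := lastTwo_snd_mem l x f
        rw [h]
        rcases List.mem_cons.mp this with h' | h'
        · rw [h']; exact List.mem_cons_self
        · exact List.mem_cons_of_mem _ (List.mem_append_left _ h')
      · exact List.mem_cons_of_mem _ (List.mem_append_right _ h)

lemma dist_to_cc (hconn : G.Connected) {W : Finset V} (hW : ∀ v, ∃ φ : G ≃g G, φ v ∈ W)
    (CC : Set V) (hCCiso : ∀ (φ : G ≃g G) (y : V), y ∈ CC → φ y ∈ CC) (x₀ : V) (hx₀ : x₀ ∈ CC) :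
    ∃ R : ℕ, ∀ v : V, ∃ q : List V, List.Chain' G.Adj (v :: q) ∧ (v :: q).Nodup ∧
      q.length ≤ R ∧ (v :: q).getLast (List.cons_ne_nil _ _) ∈ CC := by
  classical
  have pth : ∀ w : V, G.Path w x₀ := fun w => ((hconn.preconnected w x₀).some).toPath
  refine ⟨W.sup fun w => (pth w).1.length, fun v => ?_⟩
  obtain ⟨φ, hφ⟩ := hW v
  have hlen : (pth (φ v)).1.length ≤ W.sup fun w => (pth w).1.length :=
    Finset.le_sup (f := fun w => (pth w).1.length) hφ
  have hsymm : φ.symm (φ v) = v := φ.symm_apply_apply v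
  set p1 := ((pth (φ v)).1.map φ.symm.toHom).copy hsymm rfl with hp1
  have hpath : p1.IsPath := by
    rw [hp1, SimpleGraph.Walk.isPath_copy]
    exact SimpleGraph.Walk.map_isPath_of_injective φ.symm.injective (pth (φ v)).2
  have hplen : p1.length = (pth (φ v)).1.length := by
    rw [hp1, SimpleGraph.Walk.length_copy, SimpleGraph.Walk.length_map]
  refine ⟨p1.support.tail, ?_, ?_, ?_, ?_⟩
  · rw [← SimpleGraph.Walk.support_eq_cons]; exact p1.isChain_adj_support
  · rw [← SimpleGraph.Walk.support_eq_cons]; exact (SimpleGraph.Walk.isPath_def _).mp hpath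
  · have := p1.length_support
    rw [SimpleGraph.Walk.support_eq_cons p1] at this
    simp only [List.length_cons] at this
    omega
  · have ha : p1.support.getLast? = some (φ.symm.toHom x₀) := by
      rw [List.getLast?_eq_getLast p1.support_ne_nil, p1.getLast_support]
    rw [p1.support_eq_cons, List.getLast?_eq_getLast (List.cons_ne_nil _ _)] at ha
    rw [(Option.some.injEq _ _).mp ha]
    exact hCCiso φ.symm x₀ hx₀

lemma badex (hreg : ∀ v : V, (G.neighborSet v).ncard = Δ) (hΔ : 3 ≤ Δ)
    (hconn : G.Connected) {W : Finset V} (hW : ∀ v, ∃ φ : G ≃g G, φ v ∈ W)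
    (hcyc : ¬G.IsAcyclic) :
    ∃ s : ℕ, 1 ≤ s ∧ ∀ x f : V, G.Adj x f →
      ∃ l, nbk G f x l ∧ l.length = s ∧ ¬(x :: l).Nodup := by
  classical
  obtain ⟨x₀, d, hd⟩ : ∃ (x₀ : V) (d : G.Walk x₀ x₀), d.IsCycle := by
    simpa [SimpleGraph.IsAcyclic] using hcyc
  set L := d.length with hLdef
  have hL : 3 ≤ L := hd.three_le_length
  set CC : Set V := {y | ∃ c : G.Walk y y, c.IsCycle ∧ c.length = L} with hCC
  have hx₀ : x₀ ∈ CC := ⟨d, hd, rfl⟩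
  have hCCiso : ∀ (φ : G ≃g G) (y : V), y ∈ CC → φ y ∈ CC := by
    rintro φ y ⟨c, hc1, hc2⟩
    exact ⟨c.map φ.toHom, hc1.map φ.injective, by rw [SimpleGraph.Walk.length_map, hc2]⟩
  have hloop : ∀ y ∈ CC, ∀ f, ∃ l, nbk G f y l ∧ l.length = L ∧ y ∈ l := by
    rintro y ⟨c, hc1, hc2⟩ f
    exact loop_at hL c hc1 hc2 f
  obtain ⟨R, hR⟩ := dist_to_cc hconn hW CC hCCiso x₀ hx₀
  refine ⟨R + 1 + R + L, by omega, ?_⟩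
  intro x f hadj
  have hne2 : Nonempty {w : V // G.Adj x w ∧ w ≠ f} := by
    by_contra hcon
    rw [not_nonempty_iff] at hcon
    have h0 := Nat.card_of_isEmpty (α := {w : V // G.Adj x w ∧ w ≠ f})
    rw [card_nbr_erase hreg (by omega) hadj] at h0
    omega
  obtain ⟨w, hw⟩ := hne2
  obtain ⟨l1, hl1, hl1len, _⟩ := ext_nbk hreg (by omega) (R+1) [w] x f hadj
    ⟨hw.1, hw.2, trivial⟩ (by simp)
  obtain ⟨q, hq1, hq2, hq3, hq4⟩ := hR (lastTwo f x l1).2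
  obtain ⟨l2, h21, h22, h23⟩ := rec_bad CC L hloop q l1 x f hl1 (by omega) hq1 hq2 hq4
  obtain ⟨l3, h31, h32, h33⟩ := ext_nbk hreg (by omega) (R+1+R+L) l2 x f hadj h21 (by omega)
  refine ⟨l3, h31, h32, ?_⟩
  intro hnd
  exact h22 (hnd.sublist (List.cons_sublist_cons.2 h33.sublist))

open Filter Topology

lemma tendsto_tree_aux (Δ : ℕ) (hΔ : 3 ≤ Δ) (A : ℕ → ℕ)
    (hA : ∀ n : ℕ, 1 ≤ n → A n = Δ * (Δ-1)^(n-1)) :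
    Tendsto (fun n : ℕ => (A n : ℝ) ^ (1/(n:ℝ))) atTop (nhds ((Δ : ℝ) - 1)) := by
  have hΔR : (3:ℝ) ≤ (Δ:ℝ) := by exact_mod_cast hΔ
  have hb : (0:ℝ) < (Δ:ℝ) - 1 := by linarith
  have hcast : ((Δ - 1 : ℕ) : ℝ) = (Δ:ℝ) - 1 := by
    rw [Nat.cast_sub (by omega)]; simp
  have hexp : Tendsto (fun n : ℕ =>
      Real.exp ((Real.log Δ - Real.log ((Δ:ℝ)-1)) * (1/(n:ℝ)) + Real.log ((Δ:ℝ)-1)))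
      atTop (nhds ((Δ:ℝ) - 1)) := by
    have h1 : Tendsto (fun n : ℕ =>
        (Real.log Δ - Real.log ((Δ:ℝ)-1)) * (1/(n:ℝ)) + Real.log ((Δ:ℝ)-1)) atTop
        (nhds (Real.log ((Δ:ℝ)-1))) := by
      have := (tendsto_one_div_atTop_nhds_zero_nat.const_mul
        (Real.log Δ - Real.log ((Δ:ℝ)-1))).add_const (Real.log ((Δ:ℝ)-1))
      simpa using this
    have h2 := (Real.continuous_exp.tendsto _).comp h1
    simpa [Real.exp_log hb, Function.comp_def] using h2
  refine Tendsto.congr' ?_ hexp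
  filter_upwards [eventually_ge_atTop 1] with n hn
  have hn0 : (n:ℝ) ≠ 0 := by
    have : (1:ℝ) ≤ (n:ℝ) := by exact_mod_cast hn
    linarith
  have hme : (A n : ℝ) = (Δ:ℝ) * ((Δ:ℝ)-1) ^ (n-1 : ℕ) := by
    rw [hA n hn, Nat.cast_mul, Nat.cast_pow, hcast]
  have hpos : (0:ℝ) < (Δ:ℝ) * ((Δ:ℝ)-1) ^ (n-1 : ℕ) := by positivity
  rw [hme, Real.rpow_def_of_pos hpos, Real.log_mul (by positivity) (by positivity),
    Real.log_pow]
  congr 1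
  have hcn : ((n - 1 : ℕ) : ℝ) = (n:ℝ) - 1 := by
    rw [Nat.cast_sub hn]; simp
  rw [hcn]
  field_simp
  ring

lemma tendsto_cyc_aux (Δ s c : ℕ) (hs : 1 ≤ s) (hc : 1 ≤ c) (hΔ : 1 ≤ Δ) :
    Tendsto (fun k : ℕ => ((Δ * c^k : ℕ) : ℝ) ^ (1/((1 + k*s : ℕ) : ℝ))) atTop
      (nhds ((c:ℝ) ^ (1/(s:ℝ)))) := by
  have hcR : (1:ℝ) ≤ (c:ℝ) := by exact_mod_cast hc
  have hΔR : (1:ℝ) ≤ (Δ:ℝ) := by exact_mod_cast hΔ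
  have hsR : (1:ℝ) ≤ (s:ℝ) := by exact_mod_cast hs
  have hexp : Tendsto (fun k : ℕ =>
      Real.exp ((Real.log Δ - Real.log c / s) * (1/((1 + k*s : ℕ) : ℝ))
        + Real.log c / s)) atTop (nhds ((c:ℝ) ^ (1/(s:ℝ)))) := by
    have hsub : Tendsto (fun k : ℕ => (1 + k*s : ℕ)) atTop atTop := by
      refine tendsto_atTop_mono (fun k => ?_) tendsto_id
      have := Nat.mul_le_mul_left k hs
      simp only [id]
      omega
    have h0 : Tendsto (fun k : ℕ => 1/((1 + k*s : ℕ) : ℝ)) atTop (nhds 0) :=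
      tendsto_one_div_atTop_nhds_zero_nat.comp hsub
    have h1 := (h0.const_mul (Real.log Δ - Real.log c / s)).add_const (Real.log c / s)
    have h2 := (Real.continuous_exp.tendsto _).comp h1
    simp only [mul_zero, zero_add, Function.comp] at h2
    have h3 : Real.exp (Real.log c / s) = (c:ℝ) ^ (1/(s:ℝ)) := by
      rw [Real.rpow_def_of_pos (by linarith)]
      congr 1
      field_simp
    rwa [h3] at h2
  refine Tendsto.congr' ?_ hexp
  filter_upwards with k
  have hpos : (0:ℝ) < ((Δ * c^k : ℕ) : ℝ) := by
    have : (1:ℕ) ≤ Δ * c^k := Nat.one_le_iff_ne_zero.mpr (by positivity)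
    exact_mod_cast Nat.lt_of_lt_of_le Nat.zero_lt_one this
  have hden : ((1 + k*s : ℕ) : ℝ) = 1 + (k:ℝ)*(s:ℝ) := by push_cast; ring
  have hden0 : ((1 + k*s : ℕ) : ℝ) ≠ 0 := by rw [hden]; positivity
  rw [Real.rpow_def_of_pos hpos]
  congr 1
  have hlog : Real.log ((Δ * c^k : ℕ) : ℝ) = Real.log Δ + k * Real.log c := by
    push_cast
    rw [Real.log_mul (by linarith) (by positivity), Real.log_pow]
  rw [hlog]
  rw [hden]
  have hs0 : (s:ℝ) ≠ 0 := by linarith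
  have h10 : 1 + (k:ℝ)*(s:ℝ) ≠ 0 := by positivity
  field_simp
  ring

end SAWAux


namespace SAWAux
variable {V : Type*} {G : SimpleGraph V} {Δ : ℕ}

lemma sawCount_eq_sl (v : V) (n : ℕ) : sawCount G v n = Nat.card (SL G v n) :=
  card_saw_eq_card_sl v n

lemma sawCount_le_all (hreg : ∀ v : V, (G.neighborSet v).ncard = Δ) (hΔ : 1 ≤ Δ) (v : V)
    (n : ℕ) : sawCount G v n ≤ Δ * (Δ-1)^(n-1) := by
  rw [sawCount_eq_sl]
  cases n with
  | zero =>
    rw [card_sl_zero]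
    have : (Δ-1)^(0-1) = 1 := by simp
    rw [this]
    omega
  | succ n => simpa using card_sl_le hreg hΔ v n

lemma sawSup_le [Nonempty V] {n B : ℕ} (h : ∀ v : V, sawCount G v n ≤ B) :
    sawSup G n ≤ B := by
  refine csSup_le (Set.range_nonempty _) ?_
  rintro b ⟨v, rfl⟩
  exact h v

lemma sawSup_acyclic [Nonempty V] (hac : G.IsAcyclic)
    (hreg : ∀ v : V, (G.neighborSet v).ncard = Δ) (hΔ : 1 ≤ Δ) (n : ℕ) :
    sawSup G (n+1) = Δ * (Δ-1)^n := by
  have hconst : (fun v : V => sawCount G v (n+1)) = fun _ => Δ * (Δ-1)^n := by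
    funext v
    rw [sawCount_eq_sl, card_sl_acyclic hac hreg hΔ v n]
  rw [sawSup, hconst, Set.range_const, csSup_singleton]

end SAWAux

theorem mu_eq_iff_tree
    {V : Type*} (G : SimpleGraph V) (Δ : ℕ) (hΔ : 3 ≤ Δ)
    (hinf : Infinite V) (hconn : G.Connected)
    (hquasi : ∃ W : Finset V, ∀ v : V, ∃ φ : G ≃g G, φ v ∈ W)
    (hreg : ∀ v : V, (G.neighborSet v).ncard = Δ) :
    ∀ μ : ℝ,
      Filter.Tendsto (fun n : ℕ => (sawSup G n : ℝ) ^ (1 / (n : ℝ)))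
        Filter.atTop (nhds μ) →
      ((μ = (Δ : ℝ) - 1 ↔ G.IsAcyclic) ∧ (μ = (Δ : ℝ) - 1 ↔ G.IsTree)) := by
  intro μ hμ
  haveI : Nonempty V := inferInstance
  have hΔ1 : 1 ≤ Δ := by omega
  have key : μ = (Δ : ℝ) - 1 ↔ G.IsAcyclic := by
    constructor
    · -- if μ = Δ - 1 then acyclic
      intro hμeq
      by_contra hcyc
      obtain ⟨W, hW⟩ := hquasi
      obtain ⟨s, hs1, hbad⟩ := SAWAux.badex hreg hΔ hconn hW hcyc
      set c : ℕ := (Δ-1)^s - 1 with hc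
      have hpow2 : 2 ≤ (Δ-1)^s := by
        calc (2:ℕ) = 2^1 := by norm_num
        _ ≤ (Δ-1)^s := Nat.pow_le_pow_left (by omega) 1 |>.trans
            (Nat.pow_le_pow_right (by omega) hs1)
      have hc1 : 1 ≤ c := by omega
      -- the window bound
      have hUS : ∀ x f : V, G.Adj x f → Nat.card (SAWAux.US G f x s) ≤ c :=
        fun x f hadj => SAWAux.card_us_lt hreg hΔ1 hadj s (hbad x f hadj)
      have hwin : ∀ (k : ℕ) (v : V), Nat.card (SAWAux.SL G v (1 + k*s)) ≤ Δ * c^k :=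
        SAWAux.card_sl_windows hreg hΔ1 s c hUS
      have hsupb : ∀ k : ℕ, sawSup G (1 + k*s) ≤ Δ * c^k := by
        intro k
        refine SAWAux.sawSup_le (fun v => ?_)
        rw [SAWAux.sawCount_eq_sl]
        exact hwin k v
      -- subsequence limit
      have hsub : Filter.Tendsto (fun k : ℕ => 1 + k*s) atTop atTop := by
        refine tendsto_atTop_mono (fun k => ?_) tendsto_id
        have := Nat.mul_le_mul_left k hs1
        simp only [id]
        omega
      have hgsub : Filter.Tendsto
          (fun k : ℕ => (sawSup G (1 + k*s) : ℝ) ^ (1 / ((1 + k*s : ℕ) : ℝ)))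
          atTop (nhds μ) := hμ.comp hsub
      have hcomp : ∀ k : ℕ, (sawSup G (1 + k*s) : ℝ) ^ (1 / ((1 + k*s : ℕ) : ℝ))
          ≤ ((Δ * c^k : ℕ) : ℝ) ^ (1 / ((1 + k*s : ℕ) : ℝ)) := by
        intro k
        refine Real.rpow_le_rpow (Nat.cast_nonneg _) ?_ (by positivity)
        exact_mod_cast hsupb k
      have hlim2 := SAWAux.tendsto_cyc_aux Δ s c hs1 hc1 hΔ1
      have hle : μ ≤ (c:ℝ) ^ (1/(s:ℝ)) :=
        le_of_tendsto_of_tendsto' hgsub hlim2 hcomp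
      -- now show (c:ℝ)^(1/s) < Δ - 1
      have hltn : (c:ℝ) < ((Δ-1 : ℕ) : ℝ)^(s:ℕ) := by
        have : c < (Δ-1)^s := by omega
        exact_mod_cast this
      have hfin : (c:ℝ) ^ (1/(s:ℝ)) < (Δ:ℝ) - 1 := by
        have h1 : (c:ℝ) ^ (1/(s:ℝ)) < (((Δ-1 : ℕ) : ℝ)^(s:ℕ)) ^ (1/(s:ℝ)) :=
          Real.rpow_lt_rpow (Nat.cast_nonneg _) hltn (by positivity)
        have hs0 : (s:ℝ) ≠ 0 := by
          have : (1:ℝ) ≤ (s:ℝ) := by exact_mod_cast hs1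
          linarith
        have h2 : (((Δ-1 : ℕ) : ℝ)^(s:ℕ)) ^ (1/(s:ℝ)) = ((Δ-1 : ℕ) : ℝ) := by
          rw [← Real.rpow_natCast ((Δ-1 : ℕ) : ℝ) s, ← Real.rpow_mul (Nat.cast_nonneg _),
            mul_one_div, div_self hs0, Real.rpow_one]
        rw [h2] at h1
        have h3 : ((Δ-1 : ℕ) : ℝ) = (Δ:ℝ) - 1 := by
          rw [Nat.cast_sub (by omega)]; simp
        rwa [h3] at h1
      rw [hμeq] at hle
      linarith
    · -- if acyclic then μ = Δ - 1
      intro hac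
      have hA : ∀ n : ℕ, 1 ≤ n → sawSup G n = Δ * (Δ-1)^(n-1) := by
        intro n hn
        cases n with
        | zero => omega
        | succ m => simpa using SAWAux.sawSup_acyclic hac hreg hΔ1 m
      exact tendsto_nhds_unique hμ (SAWAux.tendsto_tree_aux Δ hΔ (sawSup G) hA)
  refine ⟨key, ?_⟩
  rw [key, SimpleGraph.isTree_iff]
  exact ⟨fun h => ⟨hconn, h⟩, fun h => h.2⟩
end

section
/- Let G be an infinite, connected, locally finite simple graph, let v be a vertex, and let k ≥ 1. If for every n ≥ 1 there exist k pairwise edge-disjoint self-avoiding walks of length n starting at v, then there exist k pairwise edge-disjoint infinite self-avoiding walks starting at v. -/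
namespace EdgeDisjointSawAux

open SimpleGraph Opposite CategoryTheory

variable {V : Type*} {G : SimpleGraph V}

/-- Take the first `n` edges of a walk. -/
def wtake {u w : V} : G.Walk u w → ℕ → Σ x : V, G.Walk u x
  | .nil, _ => ⟨u, .nil⟩
  | .cons _ _, 0 => ⟨u, .nil⟩
  | .cons h q, (n+1) => ⟨(wtake q n).1, .cons h (wtake q n).2⟩

lemma wtake_length {u w : V} (p : G.Walk u w) (n : ℕ) :
    (wtake p n).2.length = min n p.length := by
  induction p generalizing n with
  | nil => simp [wtake]
  | cons h q ih =>
    cases n with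
    | zero => simp [wtake]
    | succ n => simp [wtake, ih, Nat.succ_min_succ]

lemma wtake_of_le {u w : V} (p : G.Walk u w) (n : ℕ) (h : p.length ≤ n) :
    wtake p n = ⟨w, p⟩ := by
  induction p generalizing n with
  | nil => simp [wtake]
  | cons a q ih =>
    cases n with
    | zero => simp at h
    | succ n =>
      have : q.length ≤ n := by simpa using h
      rw [wtake, ih n this]

lemma wtake_wtake {u w : V} (p : G.Walk u w) (m n : ℕ) (h : m ≤ n) :
    wtake (wtake p n).2 m = wtake p m := by
  induction p generalizing m n with
  | nil => simp [wtake]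
  | cons a q ih =>
    cases n with
    | zero =>
      interval_cases m
      simp [wtake]
    | succ n =>
      cases m with
      | zero => simp [wtake]
      | succ m =>
        rw [wtake, wtake, ih m n (by omega)]
        rfl

lemma edges_wtake {u w : V} (p : G.Walk u w) (n : ℕ) :
    (wtake p n).2.edges = p.edges.take n := by
  induction p generalizing n with
  | nil => simp [wtake]
  | cons a q ih =>
    cases n with
    | zero => simp [wtake]
    | succ n => simp [wtake, ih]

lemma support_wtake {u w : V} (p : G.Walk u w) (n : ℕ) :
    (wtake p n).2.support = p.support.take (n+1) := by
  induction p generalizing n with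
  | nil => simp [wtake]
  | cons a q ih =>
    cases n with
    | zero => simp [wtake]
    | succ n => simp [wtake, ih]

lemma isPath_wtake {u w : V} {p : G.Walk u w} (hp : p.IsPath) (n : ℕ) :
    (wtake p n).2.IsPath := by
  rw [Walk.isPath_def] at hp ⊢
  rw [support_wtake]
  exact hp.sublist (List.take_sublist _ _)

lemma getVert_wtake {u w : V} (p : G.Walk u w) (m n : ℕ) (h : m ≤ n) :
    (wtake p n).2.getVert m = p.getVert m := by
  induction p generalizing m n with
  | nil => simp [wtake]
  | cons a q ih =>
    cases n with
    | zero =>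
      interval_cases m
      simp [wtake]
    | succ n =>
      cases m with
      | zero => simp [wtake]
      | succ m =>
        rw [wtake]
        show (Walk.cons a (wtake q n).2).getVert (m+1) = _
        rw [Walk.getVert_cons_succ, Walk.getVert_cons_succ]
        exact ih m n (by omega)

lemma edge_getVert_mem {u w : V} (p : G.Walk u w) (m : ℕ) (h : m < p.length) :
    s(p.getVert m, p.getVert (m+1)) ∈ p.edges := by
  induction p generalizing m with
  | nil => simp at h
  | cons a q ih =>
    cases m with
    | zero =>
      simp only [Walk.getVert_zero, Walk.getVert_cons_succ]
      rw [Walk.edges_cons]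
      exact List.mem_cons_self
    | succ m =>
      rw [Walk.getVert_cons_succ, Walk.getVert_cons_succ, Walk.edges_cons]
      exact List.mem_cons_of_mem _ (ih m (by simpa using h))

lemma isPath_getVert_inj {u w : V} {p : G.Walk u w} (hp : p.IsPath) :
    ∀ a b, a ≤ p.length → b ≤ p.length → p.getVert a = p.getVert b → a = b := by
  induction p with
  | nil => intro a b ha hb _; simp at ha hb; omega
  | cons a q ih =>
    rw [Walk.cons_isPath_iff] at hp
    intro x y hx hy hxy
    match x, y with
    | 0, 0 => rfl
    | 0, (y+1) =>
      exfalso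
      apply hp.2
      rw [Walk.getVert_zero, Walk.getVert_cons_succ] at hxy
      exact Walk.mem_support_iff_exists_getVert.mpr ⟨y, hxy.symm, by simpa using hy⟩
    | (x+1), 0 =>
      exfalso
      apply hp.2
      rw [Walk.getVert_zero, Walk.getVert_cons_succ] at hxy
      exact Walk.mem_support_iff_exists_getVert.mpr ⟨x, hxy, by simpa using hx⟩
    | (x+1), (y+1) =>
      rw [Walk.getVert_cons_succ, Walk.getVert_cons_succ] at hxy
      have := ih hp.1 x y (by simpa using hx) (by simpa using hy) hxy
      omega

lemma finite_walks_to (hlf : ∀ v : V, (G.neighborSet v).Finite) (v : V) :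
    ∀ n : ℕ, Finite {x : Σ u : V, G.Walk u v // x.2.length = n}
  | 0 => by
    have key : ∀ y : {x : Σ u : V, G.Walk u v // x.2.length = 0},
        y = ⟨⟨v, .nil⟩, rfl⟩ := by
      rintro ⟨⟨u, p⟩, h⟩
      cases p with
      | nil => rfl
      | cons a q => simp at h
    have : Subsingleton {x : Σ u : V, G.Walk u v // x.2.length = 0} :=
      ⟨fun a b => (key a).trans (key b).symm⟩
    exact Finite.of_subsingleton
  | (n+1) => by
    haveI := finite_walks_to hlf v n
    haveI : ∀ y : {x : Σ u : V, G.Walk u v // x.2.length = n},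
        Finite {z : V // G.Adj z y.1.1} := by
      intro y
      have : {z : V | G.Adj z y.1.1}.Finite :=
        (hlf y.1.1).subset (fun z hz => SimpleGraph.Adj.symm hz)
      exact this.to_subtype
    apply Finite.of_surjective
      (f := fun d : Σ y : {x : Σ u : V, G.Walk u v // x.2.length = n},
          {z : V // G.Adj z y.1.1} =>
        (⟨⟨d.2.1, .cons d.2.2 d.1.1.2⟩, by simp [d.1.2]⟩ :
          {x : Σ u : V, G.Walk u v // x.2.length = n + 1}))
    rintro ⟨⟨u, p⟩, h⟩
    cases p with
    | nil => simp at h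
    | cons a q =>
      exact ⟨⟨⟨⟨_, q⟩, by simpa using h⟩, ⟨u, a⟩⟩, rfl⟩

lemma finite_walks_from (hlf : ∀ v : V, (G.neighborSet v).Finite) (v : V) (n : ℕ) :
    Finite {x : Σ u : V, G.Walk v u // x.2.length = n} := by
  haveI := finite_walks_to hlf v n
  apply Finite.of_injective
    (f := fun x : {x : Σ u : V, G.Walk v u // x.2.length = n} =>
      (⟨⟨x.1.1, x.1.2.reverse⟩, by simp [x.2]⟩ :
        {x : Σ u : V, G.Walk u v // x.2.length = n}))
  rintro ⟨⟨u, p⟩, hp⟩ ⟨⟨u', p'⟩, hp'⟩ h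
  simp only [Subtype.mk.injEq, Sigma.mk.inj_iff] at h
  obtain ⟨rfl, h2⟩ := h
  rw [heq_iff_eq] at h2
  have : p = p' := by
    have := congrArg SimpleGraph.Walk.reverse h2
    simpa using this
  subst this
  rfl

variable (G) in
/-- Tuples of `k` pairwise edge-disjoint paths of length `n` from `v`. -/
def Tup (v : V) (k n : ℕ) : Type _ :=
  {p : Fin k → Σ u : V, G.Walk v u //
    (∀ i : Fin k, (p i).2.IsPath ∧ (p i).2.length = n) ∧
    (∀ i j : Fin k, i ≠ j →
      ∀ e : Sym2 V, e ∈ (p i).2.edges → e ∉ (p j).2.edges)}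

lemma tup_finite (hlf : ∀ v : V, (G.neighborSet v).Finite) (v : V) (k n : ℕ) :
    Finite (Tup G v k n) := by
  haveI := finite_walks_from hlf v n
  apply Finite.of_injective
    (f := fun p : Tup G v k n =>
      (fun i => ⟨p.1 i, (p.2.1 i).2⟩ :
        Fin k → {x : Σ u : V, G.Walk v u // x.2.length = n}))
  intro p q h
  apply Subtype.ext
  funext i
  exact congrArg Subtype.val (congrFun h i)

/-- Restriction of a tuple to a smaller length. -/
def restrict (v : V) (k : ℕ) {n : ℕ} (p : Tup G v k n) (m : ℕ) (h : m ≤ n) :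
    Tup G v k m := by
  refine ⟨fun i => wtake (p.1 i).2 m, ?_, ?_⟩
  · intro i
    refine ⟨isPath_wtake (p.2.1 i).1 m, ?_⟩
    rw [wtake_length, (p.2.1 i).2]
    omega
  · intro i j hij e hei hej
    rw [edges_wtake] at hei hej
    exact p.2.2 i j hij e (List.take_subset _ _ hei) (List.take_subset _ _ hej)

variable (G) in
/-- The inverse system of tuples. -/
def tupFunctor (v : V) (k : ℕ) : ℕᵒᵖ ⥤ Type _ where
  obj n := Tup G v k n.unop
  map {a b} f := TypeCat.ofHom (fun p => restrict v k p b.unop (leOfHom f.unop))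
  map_id a := by
    apply ConcreteCategory.hom_ext
    intro p
    apply Subtype.ext
    funext i
    show wtake (p.1 i).2 a.unop = p.1 i
    rw [wtake_of_le _ _ (le_of_eq (p.2.1 i).2)]
  map_comp {a b c} f g := by
    apply ConcreteCategory.hom_ext
    intro p
    apply Subtype.ext
    funext i
    show wtake (p.1 i).2 c.unop = wtake (wtake (p.1 i).2 b.unop).2 c.unop
    rw [wtake_wtake _ _ _ (leOfHom g.unop)]

end EdgeDisjointSawAux

open EdgeDisjointSawAux Opposite CategoryTheory SimpleGraph in
theorem edge_disjoint_infinite_saws_of_finite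
    {V : Type*} (G : SimpleGraph V)
    (hinf : Infinite V) (hconn : G.Connected)
    (hlf : ∀ v : V, (G.neighborSet v).Finite)
    (v : V) (k : ℕ) (hk : 1 ≤ k)
    (hfin : ∀ n : ℕ, 1 ≤ n →
      ∃ p : Fin k → (Σ u : V, G.Walk v u),
        (∀ i : Fin k, (p i).2.IsPath ∧ (p i).2.length = n) ∧
        (∀ i j : Fin k, i ≠ j →
          ∀ e : Sym2 V, e ∈ (p i).2.edges → e ∉ (p j).2.edges)) :
    ∃ w : Fin k → ℕ → V,
      (∀ i : Fin k, w i 0 = v ∧ Function.Injective (w i) ∧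
        ∀ m : ℕ, G.Adj (w i m) (w i (m + 1))) ∧
      (∀ i j : Fin k, i ≠ j → ∀ m m' : ℕ,
        s(w i m, w i (m + 1)) ≠ s(w j m', w j (m' + 1))) := by
  haveI : ∀ n : ℕᵒᵖ, Finite ((tupFunctor G v k).obj n) := fun n =>
    tup_finite hlf v k n.unop
  haveI : ∀ n : ℕᵒᵖ, Nonempty ((tupFunctor G v k).obj n) := by
    intro n
    rcases Nat.eq_zero_or_pos n.unop with h0 | h1
    · refine ⟨fun _ => ⟨v, .nil⟩, fun i => ⟨Walk.IsPath.nil, by simp [h0]⟩, ?_⟩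
      intro i j hij e he
      simp [Walk.edges_nil] at he
    · obtain ⟨p, h1, h2⟩ := hfin n.unop h1
      exact ⟨p, h1, h2⟩
  obtain ⟨x, hx⟩ := nonempty_sections_of_finite_inverse_system (tupFunctor G v k)
  -- the limit walks
  set w : Fin k → ℕ → V := fun i m => ((x (op m)).1 i).2.getVert m with hw
  have key : ∀ (i : Fin k) (m n : ℕ), m ≤ n →
      ((x (op n)).1 i).2.getVert m = w i m := by
    intro i m n h
    have hsec := hx (f := ((homOfLE h).op : op n ⟶ op m))
    have : (x (op m)).1 i = wtake ((x (op n)).1 i).2 m := by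
      rw [← hsec]; rfl
    rw [hw]
    show _ = ((x (op m)).1 i).2.getVert m
    rw [this, getVert_wtake _ _ _ le_rfl]
  have hlen : ∀ (i : Fin k) (n : ℕ), ((x (op n)).1 i).2.length = n := fun i n =>
    ((x (op n)).2.1 i).2
  have hpath : ∀ (i : Fin k) (n : ℕ), ((x (op n)).1 i).2.IsPath := fun i n =>
    ((x (op n)).2.1 i).1
  refine ⟨w, fun i => ⟨?_, ?_, ?_⟩, ?_⟩
  · -- w i 0 = v
    simp [hw]
  · -- injectivity
    intro a b hab
    have ha : a ≤ max a b := le_max_left a b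
    have hb : b ≤ max a b := le_max_right a b
    rw [← key i a (max a b) ha, ← key i b (max a b) hb] at hab
    exact isPath_getVert_inj (hpath i (max a b)) a b
      (by rw [hlen]; exact ha) (by rw [hlen]; exact hb) hab
  · -- adjacency
    intro m
    have h1 : m ≤ m + 1 := Nat.le_succ m
    rw [← key i m (m+1) h1, ← key i (m+1) (m+1) le_rfl]
    exact Walk.adj_getVert_succ _ (by rw [hlen]; omega)
  · -- edge-disjointness
    intro i j hij m m' heq
    set n := max (m+1) (m'+1) with hn
    have hm : m + 1 ≤ n := le_max_left _ _
    have hm' : m' + 1 ≤ n := le_max_right _ _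
    have e1 : s(w i m, w i (m+1)) ∈ ((x (op n)).1 i).2.edges := by
      rw [← key i m n (by omega), ← key i (m+1) n hm]
      exact edge_getVert_mem _ m (by rw [hlen]; omega)
    have e2 : s(w j m', w j (m'+1)) ∈ ((x (op n)).1 j).2.edges := by
      rw [← key j m' n (by omega), ← key j (m'+1) n hm']
      exact edge_getVert_mem _ m' (by rw [hlen]; omega)
    rw [heq] at e1
    exact (x (op n)).2.2 i j hij _ e1 e2
end

section
/- Let Δ ≥ 3 and let G be an infinite, connected simple graph in which every vertex has degree at most Δ. Suppose there exists N ≥ 1 such that for every vertex u and every edge e incident to u, the number of N-step self-avoiding walks from u that do not traverse e is at most (Δ−1)^N − 1. Then for every vertex v and every k ≥ 1, σ_{kN}(v) ≤ Δ·((Δ−1)^N − 1)^k, and consequently limsup_{n→∞} σ_n(v)^{1/n} ≤ ((Δ−1)^N − 1)^{1/N} < Δ−1 for every vertex v. -/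
open Filter Topology

/-- The number of `n`-step self-avoiding walks in `G` starting at `u` that do not
traverse the edge `e`. -/
noncomputable def sawCountAvoid {V : Type*} (G : SimpleGraph V) (u : V) (e : Sym2 V)
    (n : ℕ) : ℕ :=
  Nat.card {p : Σ u' : V, G.Walk u u' //
    p.2.IsPath ∧ p.2.length = n ∧ e ∉ p.2.edges}

namespace SAWAux

open SimpleGraph

variable {V : Type*} {G : SimpleGraph V}

/-- Prefix of a walk. -/
def wtake {u v : V} : (p : G.Walk u v) → (n : ℕ) → G.Walk u (p.getVert n)
  | p, 0 => Walk.nil.copy rfl (p.getVert_zero).symm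
  | Walk.nil, _ + 1 => Walk.nil
  | Walk.cons h q, n + 1 =>
      (Walk.cons h (wtake q n)).copy rfl (Walk.getVert_cons_succ q h).symm

lemma wtake_append_drop {u v : V} (p : G.Walk u v) (n : ℕ) :
    (wtake p n).append (p.drop n) = p := by
  induction p generalizing n with
  | nil => cases n <;> rfl
  | cons h q ih =>
    cases n with
    | zero => rfl
    | succ n =>
      show Walk.cons h ((wtake q n).append (q.drop n)) = Walk.cons h q
      rw [ih]

lemma length_wtake {u v : V} (p : G.Walk u v) (n : ℕ) (h : n ≤ p.length) :
    (wtake p n).length = n := by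
  induction p generalizing n with
  | nil =>
    simp only [SimpleGraph.Walk.length_nil, Nat.le_zero] at h
    subst h; rfl
  | cons ha q ih =>
    cases n with
    | zero => rfl
    | succ n =>
      show (Walk.cons ha (wtake q n)).length = n + 1
      rw [Walk.length_cons, ih n (by simpa using h)]

lemma length_drop {u v : V} (p : G.Walk u v) (n : ℕ) :
    (p.drop n).length = p.length - n := by
  induction p generalizing n with
  | nil =>
    cases n with
    | zero => rfl
    | succ n => simp [SimpleGraph.Walk.drop]
  | cons ha q ih =>
    cases n with
    | zero => rfl
    | succ n =>
      show (q.drop n).length = (q.length + 1) - (n + 1)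
      rw [ih]
      omega

lemma wtake_getVert {u v : V} (p : G.Walk u v) {n i : ℕ} (h : i ≤ n) :
    (wtake p n).getVert i = p.getVert i := by
  induction p generalizing n i with
  | nil =>
    cases n with
    | zero => interval_cases i; rfl
    | succ n => rfl
  | cons ha q ih =>
    cases n with
    | zero => interval_cases i; rfl
    | succ n =>
      cases i with
      | zero => rfl
      | succ i =>
        show (wtake q n).getVert i = q.getVert i
        exact ih (by omega)


lemma sigma_walk_eq {v y z : V} {q : G.Walk v z} {t : G.Walk v y}
    (h : (⟨z, q⟩ : Σ w : V, G.Walk v w) = ⟨y, t⟩) :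
    ∃ hz : z = y, q.copy rfl hz = t := by
  obtain ⟨h1, h2⟩ := Sigma.mk.inj_iff.mp h
  subst h1
  exact ⟨rfl, eq_of_heq h2⟩

lemma sigma_drop_recon {v y x : V} (p : G.Walk v x) (m : ℕ) (h : p.getVert m = y) :
    (⟨x, ((wtake p m).copy rfl h).append ((p.drop m).copy h rfl)⟩ : Σ z : V, G.Walk v z)
      = ⟨x, p⟩ := by
  subst h
  exact congrArg (Sigma.mk x) (wtake_append_drop p m)

lemma sigma_tail_recon {u x z : V} (p : G.Walk u z) (h1 : p.getVert 1 = x)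
    (hadj : G.Adj u x) (hnil : ¬ p.Nil) :
    (⟨z, Walk.cons hadj (p.tail.copy h1 rfl)⟩ : Σ w : V, G.Walk u w) = ⟨z, p⟩ := by
  subst h1
  exact congrArg (Sigma.mk z) (p.cons_tail_eq hnil)

lemma nat_card_le_mul {α β : Type*} [Finite α] [Finite β] (f : α → β) (M : ℕ)
    (h : ∀ b : β, Nat.card {a : α // f a = b} ≤ M) :
    Nat.card α ≤ Nat.card β * M := by
  classical
  cases nonempty_fintype α
  cases nonempty_fintype β
  rw [Nat.card_eq_fintype_card, Nat.card_eq_fintype_card]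
  have h2 : ∀ b ∈ Finset.univ.image f,
      ((Finset.univ : Finset α).filter (fun a => f a = b)).card ≤ M := by
    intro b _
    rw [← Fintype.card_subtype]
    exact le_trans (Nat.card_eq_fintype_card (α := {a : α // f a = b})).symm.le (h b)
  calc Fintype.card α = (Finset.univ : Finset α).card := rfl
    _ ≤ M * ((Finset.univ : Finset α).image f).card :=
        Finset.card_le_mul_card_image _ M h2
    _ ≤ M * Fintype.card β := by
        have := Finset.card_le_univ ((Finset.univ : Finset α).image f)
        exact Nat.mul_le_mul_left M this
    _ = Fintype.card β * M := Nat.mul_comm _ _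

lemma finite_walk_len (hdeg : ∀ v : V, (G.neighborSet v).Finite) :
    ∀ (n : ℕ) (u : V), Finite {p : Σ x : V, G.Walk u x // p.2.length = n} := by
  intro n
  induction n with
  | zero =>
    intro u
    have : Subsingleton {p : Σ x : V, G.Walk u x // p.2.length = 0} := by
      constructor
      rintro ⟨⟨x, p⟩, hp⟩ ⟨⟨y, q⟩, hq⟩
      cases p with
      | nil =>
        cases q with
        | nil => rfl
        | cons h q => simp at hq
      | cons h p => simp at hp
    exact Finite.of_subsingleton
  | succ n ih =>
    intro u
    haveI : Finite ↥(G.neighborSet u) := (hdeg u).to_subtype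
    haveI : ∀ w : ↥(G.neighborSet u),
        Finite {q : Σ x : V, G.Walk (w : V) x // q.2.length = n} := fun w => ih _
    have hF : ∀ a : {p : Σ x : V, G.Walk u x // p.2.length = n + 1}, ¬ a.1.2.Nil := by
      intro a
      rw [Walk.nil_iff_length_eq, a.2]
      omega
    refine Finite.of_injective
      (fun a : {p : Σ x : V, G.Walk u x // p.2.length = n + 1} =>
        (⟨⟨a.1.2.getVert 1, a.1.2.adj_snd (hF a)⟩,
          ⟨⟨a.1.1, a.1.2.tail⟩, by
            show a.1.2.tail.length = n
            have := a.1.2.length_tail_add_one (hF a)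
            have h2 := a.2
            omega⟩⟩ :
          Σ w : ↥(G.neighborSet u), {q : Σ x : V, G.Walk (w : V) x // q.2.length = n}))
      ?_
    intro a b hab
    have hval := congrArg
      (fun z : (Σ w : ↥(G.neighborSet u), {q : Σ x : V, G.Walk (w : V) x // q.2.length = n}) =>
        (⟨z.2.1.1, Walk.cons z.1.2 z.2.1.2⟩ : Σ x : V, G.Walk u x)) hab
    have ka : (⟨a.1.1, Walk.cons (a.1.2.adj_snd (hF a)) a.1.2.tail⟩
        : Σ x : V, G.Walk u x) = a.1 :=
      congrArg (Sigma.mk a.1.1) (a.1.2.cons_tail_eq (hF a))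
    have kb : (⟨b.1.1, Walk.cons (b.1.2.adj_snd (hF b)) b.1.2.tail⟩
        : Σ x : V, G.Walk u x) = b.1 :=
      congrArg (Sigma.mk b.1.1) (b.1.2.cons_tail_eq (hF b))
    exact Subtype.ext (ka.symm.trans (hval.trans kb))

lemma finite_of_length_prop (hdeg : ∀ v : V, (G.neighborSet v).Finite) {u : V} {n : ℕ}
    (P : (Σ x : V, G.Walk u x) → Prop) (hP : ∀ p, P p → p.2.length = n) :
    Finite {p : Σ x : V, G.Walk u x // P p} := by
  haveI := finite_walk_len hdeg n u
  exact Finite.of_injective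
    (fun a => (⟨a.1, hP _ a.2⟩ : {p : Σ x : V, G.Walk u x // p.2.length = n}))
    (fun a b h => Subtype.ext (congrArg (fun z : {p : Σ x : V, G.Walk u x // p.2.length = n} => z.1) h))

lemma card_len_zero_le_one {u : V} (P : (Σ x : V, G.Walk u x) → Prop)
    (hP : ∀ p, P p → p.2.length = 0) :
    Nat.card {p : Σ x : V, G.Walk u x // P p} ≤ 1 := by
  have hs : Subsingleton {p : Σ x : V, G.Walk u x // P p} := by
    constructor
    rintro ⟨⟨x, p⟩, hp⟩ ⟨⟨y, q⟩, hq⟩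
    have h1 := hP _ hp
    have h2 := hP _ hq
    cases p with
    | nil =>
      cases q with
      | nil => rfl
      | cons h q => simp at h2
    | cons h p => simp at h1
  rcases isEmpty_or_nonempty {p : Σ x : V, G.Walk u x // P p} with he | hne
  · simp [Nat.card_of_isEmpty]
  · exact le_of_eq Nat.card_unique


/-- The fiber of `n+1`-step paths whose first vertex is `x` injects into
`n`-step paths from `x` avoiding `u`. -/
lemma tail_fiber_le {u x : V} {n : ℕ} (hx : G.Adj u x)
    (hdeg : ∀ v : V, (G.neighborSet v).Finite)
    (P : (Σ z : V, G.Walk u z) → Prop)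
    (hP : ∀ p, P p → p.2.IsPath ∧ p.2.length = n + 1) :
    Nat.card {a : {p : Σ z : V, G.Walk u z // P p} // a.1.2.getVert 1 = x} ≤
      Nat.card {r : Σ z : V, G.Walk x z //
        r.2.IsPath ∧ r.2.length = n ∧ u ∉ r.2.support} := by
  haveI : Finite {r : Σ z : V, G.Walk x z //
      r.2.IsPath ∧ r.2.length = n ∧ u ∉ r.2.support} :=
    finite_of_length_prop hdeg _ (fun p hp => hp.2.1)
  have hnil : ∀ a : {p : Σ z : V, G.Walk u z // P p}, ¬ a.1.2.Nil := by
    intro a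
    rw [Walk.nil_iff_length_eq, (hP _ a.2).2]
    omega
  refine Nat.card_le_card_of_injective
    (fun a => ⟨⟨a.1.1.1, (a.1.1.2.tail).copy a.2 rfl⟩, ?_, ?_, ?_⟩) ?_
  · rw [Walk.isPath_copy]
    exact (hP _ a.1.2).1.tail
  · rw [Walk.length_copy]
    have := a.1.1.2.length_tail_add_one (hnil a.1)
    have h2 := (hP _ a.1.2).2
    omega
  · rw [Walk.support_copy, Walk.support_tail_of_not_nil _ (hnil a.1)]
    have hnd := (hP _ a.1.2).1.support_nodup
    rw [a.1.1.2.support_eq_cons] at hnd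
    exact (List.nodup_cons.mp hnd).1
  · intro a b hab
    have hval := congrArg
      (fun r : {r : Σ z : V, G.Walk x z //
          r.2.IsPath ∧ r.2.length = n ∧ u ∉ r.2.support} =>
        (⟨r.1.1, Walk.cons hx r.1.2⟩ : Σ w : V, G.Walk u w)) hab
    have ka := sigma_tail_recon a.1.1.2 a.2 hx (hnil a.1)
    have kb := sigma_tail_recon b.1.1.2 b.2 hx (hnil b.1)
    exact Subtype.ext (Subtype.ext (ka.symm.trans (hval.trans kb)))

lemma card_neighbor_sub {Δ : ℕ} (hdegc : ∀ v : V, (G.neighborSet v).ncard ≤ Δ)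
    (hdeg : ∀ v : V, (G.neighborSet v).Finite) (u w : V) (hw : G.Adj u w) :
    Nat.card ↥(G.neighborSet u \ {w}) ≤ Δ - 1 := by
  have hwm : w ∈ G.neighborSet u := hw
  rw [Nat.card_coe_set_eq, Set.ncard_diff_singleton_of_mem hwm]
  exact Nat.sub_le_sub_right (hdegc u) 1

lemma avoidV {Δ : ℕ} (hdeg : ∀ v : V, (G.neighborSet v).Finite)
    (hdegc : ∀ v : V, (G.neighborSet v).ncard ≤ Δ) :
    ∀ (n : ℕ) (u w : V), G.Adj u w →
      Nat.card {p : Σ x : V, G.Walk u x //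
        p.2.IsPath ∧ p.2.length = n ∧ w ∉ p.2.support} ≤ (Δ - 1) ^ n := by
  intro n
  induction n with
  | zero =>
    intro u w _
    simpa using card_len_zero_le_one _ (fun p hp => Walk.nil_iff_length_eq.mp hp.2.1)
  | succ n ih =>
    intro u w hw
    haveI : Finite {p : Σ x : V, G.Walk u x //
        p.2.IsPath ∧ p.2.length = n + 1 ∧ w ∉ p.2.support} :=
      finite_of_length_prop hdeg _ (fun p hp => hp.2.1)
    haveI : Finite ↥(G.neighborSet u \ {w}) :=
      ((hdeg u).subset Set.diff_subset).to_subtype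
    have hnil : ∀ a : {p : Σ x : V, G.Walk u x //
        p.2.IsPath ∧ p.2.length = n + 1 ∧ w ∉ p.2.support}, ¬ a.1.2.Nil := by
      intro a
      rw [Walk.nil_iff_length_eq, a.2.2.1]
      omega
    have hmem : ∀ a : {p : Σ x : V, G.Walk u x //
        p.2.IsPath ∧ p.2.length = n + 1 ∧ w ∉ p.2.support},
        a.1.2.getVert 1 ∈ G.neighborSet u \ {w} := by
      intro a
      refine ⟨a.1.2.adj_snd (hnil a), ?_⟩
      intro hcon
      have hc : a.1.2.getVert 1 = w := hcon
      have h1 : a.1.2.getVert 1 ∈ a.1.2.support :=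
        Walk.mem_support_iff_exists_getVert.mpr ⟨1, rfl, by
          have := a.2.2.1; omega⟩
      rw [hc] at h1
      exact a.2.2.2 h1
    calc Nat.card {p : Σ x : V, G.Walk u x //
        p.2.IsPath ∧ p.2.length = n + 1 ∧ w ∉ p.2.support}
        ≤ Nat.card ↥(G.neighborSet u \ {w}) * (Δ - 1) ^ n := by
          refine nat_card_le_mul (fun a => ⟨a.1.2.getVert 1, hmem a⟩) _ ?_
          intro b
          refine le_trans (Nat.card_le_card_of_injective
            (fun a => (⟨a.1, congrArg Subtype.val a.2⟩ :
              {a : {p : Σ x : V, G.Walk u x //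
                p.2.IsPath ∧ p.2.length = n + 1 ∧ w ∉ p.2.support} //
                a.1.2.getVert 1 = (b : V)}))
            (fun a a' h => Subtype.ext (congrArg (fun z :
              {a : {p : Σ x : V, G.Walk u x //
                p.2.IsPath ∧ p.2.length = n + 1 ∧ w ∉ p.2.support} //
                a.1.2.getVert 1 = (b : V)} => z.1) h))) ?_
          refine le_trans (tail_fiber_le (b.2.1 : G.Adj u (b : V)) hdeg _
            (fun p hp => ⟨hp.1, hp.2.1⟩)) ?_
          exact ih (b : V) u (G.adj_symm b.2.1)
      _ ≤ (Δ - 1) * (Δ - 1) ^ n := by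
          exact Nat.mul_le_mul_right _ (card_neighbor_sub hdegc hdeg u w hw)
      _ = (Δ - 1) ^ (n + 1) := (pow_succ' _ _).symm

lemma saw_step {Δ : ℕ} (hdeg : ∀ v : V, (G.neighborSet v).Finite)
    (hdegc : ∀ v : V, (G.neighborSet v).ncard ≤ Δ) (n : ℕ) (u : V) :
    Nat.card {p : Σ x : V, G.Walk u x // p.2.IsPath ∧ p.2.length = n + 1} ≤
      Δ * (Δ - 1) ^ n := by
  haveI : Finite {p : Σ x : V, G.Walk u x // p.2.IsPath ∧ p.2.length = n + 1} :=
    finite_of_length_prop hdeg _ (fun p hp => hp.2)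
  haveI : Finite ↥(G.neighborSet u) := (hdeg u).to_subtype
  have hnil : ∀ a : {p : Σ x : V, G.Walk u x // p.2.IsPath ∧ p.2.length = n + 1},
      ¬ a.1.2.Nil := by
    intro a
    rw [Walk.nil_iff_length_eq, a.2.2]
    omega
  calc Nat.card {p : Σ x : V, G.Walk u x // p.2.IsPath ∧ p.2.length = n + 1}
      ≤ Nat.card ↥(G.neighborSet u) * (Δ - 1) ^ n := by
        refine nat_card_le_mul
          (fun a => (⟨a.1.2.getVert 1, a.1.2.adj_snd (hnil a)⟩ :
            ↥(G.neighborSet u))) _ ?_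
        intro b
        refine le_trans (Nat.card_le_card_of_injective
          (fun a => (⟨a.1, congrArg Subtype.val a.2⟩ :
            {a : {p : Σ x : V, G.Walk u x // p.2.IsPath ∧ p.2.length = n + 1} //
              a.1.2.getVert 1 = (b : V)}))
          (fun a a' h => Subtype.ext (congrArg (fun z :
            {a : {p : Σ x : V, G.Walk u x // p.2.IsPath ∧ p.2.length = n + 1} //
              a.1.2.getVert 1 = (b : V)} => z.1) h))) ?_
        refine le_trans (tail_fiber_le (b.2 : G.Adj u (b : V)) hdeg _
          (fun p hp => hp)) ?_
        exact avoidV hdeg hdegc n (b : V) u (G.adj_symm b.2)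
    _ ≤ Δ * (Δ - 1) ^ n := by
        refine Nat.mul_le_mul_right _ ?_
        rw [Nat.card_coe_set_eq]
        exact hdegc u

lemma saw_crude {Δ : ℕ} (hdeg : ∀ v : V, (G.neighborSet v).Finite)
    (hdegc : ∀ v : V, (G.neighborSet v).ncard ≤ Δ) (n : ℕ) (u : V) :
    Nat.card {p : Σ x : V, G.Walk u x // p.2.IsPath ∧ p.2.length = n} ≤ Δ ^ n := by
  cases n with
  | zero => simpa using card_len_zero_le_one _ (fun p hp => Walk.nil_iff_length_eq.mp hp.2)
  | succ n =>
    refine le_trans (saw_step hdeg hdegc n u) ?_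
    calc Δ * (Δ - 1) ^ n ≤ Δ * Δ ^ n :=
          Nat.mul_le_mul_left Δ (Nat.pow_le_pow_left (Nat.sub_le Δ 1) n)
      _ = Δ ^ (n + 1) := (pow_succ' _ _).symm

lemma split_bound (hdeg : ∀ v : V, (G.neighborSet v).Finite) (v : V) (m j : ℕ)
    (hm : 1 ≤ m) (C : ℕ)
    (hC : ∀ (y : V) (e : Sym2 V), e ∈ G.incidenceSet y →
      Nat.card {r : Σ z : V, G.Walk y z //
        r.2.IsPath ∧ r.2.length = j ∧ e ∉ r.2.edges} ≤ C) :
    Nat.card {p : Σ x : V, G.Walk v x // p.2.IsPath ∧ p.2.length = m + j} ≤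
      Nat.card {q : Σ y : V, G.Walk v y // q.2.IsPath ∧ q.2.length = m} * C := by
  haveI : Finite {p : Σ x : V, G.Walk v x // p.2.IsPath ∧ p.2.length = m + j} :=
    finite_of_length_prop hdeg _ (fun p hp => hp.2)
  haveI : Finite {q : Σ y : V, G.Walk v y // q.2.IsPath ∧ q.2.length = m} :=
    finite_of_length_prop hdeg _ (fun p hp => hp.2)
  -- the prefix map
  have htake : ∀ a : {p : Σ x : V, G.Walk v x // p.2.IsPath ∧ p.2.length = m + j},
      (wtake a.1.2 m).IsPath ∧ (wtake a.1.2 m).length = m := by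
    intro a
    constructor
    · have hp := a.2.1
      rw [← wtake_append_drop a.1.2 m] at hp
      exact hp.of_append_left
    · exact length_wtake _ _ (by rw [a.2.2]; omega)
  refine nat_card_le_mul
    (fun a => (⟨⟨a.1.2.getVert m, wtake a.1.2 m⟩, htake a⟩ :
      {q : Σ y : V, G.Walk v y // q.2.IsPath ∧ q.2.length = m})) C ?_
  rintro ⟨⟨y, t⟩, ht, htl⟩
  have htl' : t.length = m := htl
  -- the marked edge
  have hm1 : m - 1 + 1 = m := by omega
  have hadj : G.Adj (t.getVert (m - 1)) y := by
    have h0 := t.adj_getVert_succ (i := m - 1) (by omega)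
    rw [hm1] at h0
    have h1 : t.getVert m = y := by
      rw [← htl']
      exact t.getVert_length
    rwa [h1] at h0
  have hinc : s(t.getVert (m - 1), y) ∈ G.incidenceSet y :=
    ⟨hadj, Sym2.mem_mk_right _ _⟩
  haveI : Finite {r : Σ z : V, G.Walk y z //
      r.2.IsPath ∧ r.2.length = j ∧ s(t.getVert (m - 1), y) ∉ r.2.edges} :=
    finite_of_length_prop hdeg _ (fun p hp => hp.2.1)
  refine le_trans (Nat.card_le_card_of_injective
    (fun a => ⟨⟨a.1.1.1, (a.1.1.2.drop m).copy
        (congrArg (fun z : {q : Σ y0 : V, G.Walk v y0 //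
          q.2.IsPath ∧ q.2.length = m} => z.1.1) a.2) rfl⟩, ?hp1, ?hp2, ?hp3⟩)
      ?hinj)
    (hC y (s(t.getVert (m - 1), y)) hinc)
  case hp1 =>
    dsimp only
    rw [Walk.isPath_copy]
    have hp := a.1.2.1
    rw [← wtake_append_drop a.1.1.2 m] at hp
    exact hp.of_append_right
  case hp2 =>
    dsimp only
    rw [Walk.length_copy, length_drop, a.1.2.2]
    omega
  case hp3 =>
    dsimp only
    have hsig : (⟨a.1.1.2.getVert m, wtake a.1.1.2 m⟩ : Σ z : V, G.Walk v z)
        = ⟨y, t⟩ := congrArg Subtype.val a.2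
    obtain ⟨hz, htt⟩ := sigma_walk_eq hsig
    have het : t.getVert (m - 1) = a.1.1.2.getVert (m - 1) := by
      have h9 := congrArg (fun w : G.Walk v y => w.getVert (m - 1)) htt
      simp only [Walk.getVert_copy] at h9
      rw [wtake_getVert _ (by omega : m - 1 ≤ m)] at h9
      exact h9.symm
    intro hcon
    rw [Walk.edges_copy] at hcon
    have h5 : t.getVert (m - 1) ∈ (a.1.1.2.drop m).support :=
      Walk.fst_mem_support_of_mem_edges _ hcon
    rw [het] at h5
    have hne : a.1.1.2.getVert (m - 1) ≠ a.1.1.2.getVert m := by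
      have h6 := a.1.1.2.adj_getVert_succ (i := m - 1)
        (by rw [a.1.2.2]; omega)
      rw [hm1] at h6
      exact h6.ne
    have h7 : a.1.1.2.getVert (m - 1) ∈ (a.1.1.2.drop m).support.tail := by
      rw [(a.1.1.2.drop m).support_eq_cons] at h5
      rcases List.mem_cons.mp h5 with h5 | h5
      · exact absurd h5 hne
      · exact h5
    have hnd := a.1.2.1.support_nodup
    have hsupp : a.1.1.2.support =
        (wtake a.1.1.2 m).support ++ (a.1.1.2.drop m).support.tail := by
      have h8 := congrArg Walk.support (wtake_append_drop a.1.1.2 m)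
      rw [Walk.support_append] at h8
      exact h8.symm
    rw [hsupp] at hnd
    have hdisj := (List.nodup_append'.mp hnd).2.2
    refine hdisj ?_ h7
    exact Walk.mem_support_iff_exists_getVert.mpr
      ⟨m - 1, wtake_getVert _ (by omega), by
        rw [length_wtake _ _ (by rw [a.1.2.2]; omega)]; omega⟩
  case hinj =>
    intro a a' hab
    have hsig : (⟨a.1.1.2.getVert m, wtake a.1.1.2 m⟩ : Σ z : V, G.Walk v z)
        = ⟨y, t⟩ := congrArg Subtype.val a.2
    have hsig' : (⟨a'.1.1.2.getVert m, wtake a'.1.1.2 m⟩ : Σ z : V, G.Walk v z)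
        = ⟨y, t⟩ := congrArg Subtype.val a'.2
    obtain ⟨hz, htt⟩ := sigma_walk_eq hsig
    obtain ⟨hz', htt'⟩ := sigma_walk_eq hsig'
    have hval := congrArg
      (fun r : {r : Σ z : V, G.Walk y z //
          r.2.IsPath ∧ r.2.length = j ∧ s(t.getVert (m - 1), y) ∉ r.2.edges} =>
        (⟨r.1.1, t.append r.1.2⟩ : Σ z : V, G.Walk v z)) hab
    have ka := sigma_drop_recon a.1.1.2 m hz
    rw [htt] at ka
    have ka' := sigma_drop_recon a'.1.1.2 m hz'
    rw [htt'] at ka'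
    exact Subtype.ext (Subtype.ext (ka.symm.trans (hval.trans ka')))


end SAWAux

theorem saw_bound_of_avoid_bound
    {V : Type*} (G : SimpleGraph V) (Δ : ℕ) (hΔ : 3 ≤ Δ)
    (hinf : Infinite V) (hconn : G.Connected)
    (hdeg : ∀ v : V, (G.neighborSet v).Finite ∧ (G.neighborSet v).ncard ≤ Δ)
    (N : ℕ) (hN : 1 ≤ N)
    (hav : ∀ u : V, ∀ e ∈ G.incidenceSet u,
      sawCountAvoid G u e N ≤ (Δ - 1) ^ N - 1) :
    (∀ v : V, ∀ k : ℕ, 1 ≤ k →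
      sawCount G v (k * N) ≤ Δ * ((Δ - 1) ^ N - 1) ^ k) ∧
    (∀ v : V,
      Filter.limsup (fun n : ℕ => (sawCount G v n : ℝ) ^ (1 / (n : ℝ)))
          Filter.atTop ≤
        (((Δ : ℝ) - 1) ^ N - 1) ^ (1 / (N : ℝ))) ∧
    (((Δ : ℝ) - 1) ^ N - 1) ^ (1 / (N : ℝ)) < (Δ : ℝ) - 1 := by
  have hdegf : ∀ v : V, (G.neighborSet v).Finite := fun v => (hdeg v).1
  have hdegc : ∀ v : V, (G.neighborSet v).ncard ≤ Δ := fun v => (hdeg v).2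
  have hΔ2 : 2 ≤ Δ - 1 := by omega
  have hpow2 : 2 ≤ (Δ - 1) ^ N := by
    calc (2 : ℕ) = 2 ^ 1 := rfl
      _ ≤ 2 ^ N := Nat.pow_le_pow_right (by norm_num) hN
      _ ≤ (Δ - 1) ^ N := Nat.pow_le_pow_left hΔ2 N
  have hM1 : 1 ≤ (Δ - 1) ^ N - 1 := by omega
  -- base case: paths of length N
  have hbase : ∀ v : V, sawCount G v N ≤ Δ * ((Δ - 1) ^ N - 1) := by
    intro v
    obtain ⟨N', rfl⟩ : ∃ N', N = N' + 1 := ⟨N - 1, by omega⟩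
    refine le_trans (SAWAux.saw_step hdegf hdegc N' v) ?_
    refine Nat.mul_le_mul_left Δ ?_
    have h1 : (Δ - 1) ^ (N' + 1) = (Δ - 1) ^ N' * (Δ - 1) := pow_succ _ _
    have h2 : 1 ≤ (Δ - 1) ^ N' := Nat.one_le_pow _ _ (by omega)
    have h3 : (Δ - 1) ^ N' * 2 ≤ (Δ - 1) ^ (N' + 1) := by
      rw [h1]
      exact Nat.mul_le_mul_left _ hΔ2
    omega
  -- splitting off the last N steps
  have hstep : ∀ (v : V) (m : ℕ), 1 ≤ m →
      sawCount G v (m + N) ≤ sawCount G v m * ((Δ - 1) ^ N - 1) := by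
    intro v m hm
    exact SAWAux.split_bound hdegf v m N hm ((Δ - 1) ^ N - 1)
      (fun y e he => hav y e he)
  -- part 1
  have key1 : ∀ (v : V) (k : ℕ), 1 ≤ k →
      sawCount G v (k * N) ≤ Δ * ((Δ - 1) ^ N - 1) ^ k := by
    intro v k hk
    induction k with
    | zero => omega
    | succ k ih =>
      rcases Nat.eq_zero_or_pos k with rfl | hkpos
      · simpa using hbase v
      · have h1 : (k + 1) * N = k * N + N := by ring
        rw [h1]
        refine le_trans (hstep v (k * N) (by
          have := Nat.mul_le_mul hkpos hN
          omega)) ?_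
        refine le_trans (Nat.mul_le_mul_right _ (ih hkpos)) ?_
        rw [mul_assoc, ← pow_succ]
  -- crude bound for remainders
  have hcrude : ∀ (u : V) (n : ℕ), sawCount G u n ≤ Δ ^ n :=
    fun u n => SAWAux.saw_crude hdegf hdegc n u
  -- general upper bound for n ≥ N
  have hub : ∀ (v : V) (n : ℕ), N ≤ n →
      sawCount G v n ≤ Δ ^ N * ((Δ - 1) ^ N - 1) ^ (n / N) := by
    intro v n hn
    have hdm := Nat.div_add_mod n N
    have hkpos : 1 ≤ n / N := (Nat.one_le_div_iff (by omega)).mpr hn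
    have hrlt : n % N < N := Nat.mod_lt _ (by omega)
    have hn' : n = (n / N) * N + n % N := by
      rw [Nat.mul_comm]
      omega
    have hC : ∀ (y : V) (e : Sym2 V), e ∈ G.incidenceSet y →
        Nat.card {r : Σ z : V, G.Walk y z //
          r.2.IsPath ∧ r.2.length = n % N ∧ e ∉ r.2.edges} ≤ Δ ^ (n % N) := by
      intro y e _
      haveI : Finite {r : Σ z : V, G.Walk y z //
          r.2.IsPath ∧ r.2.length = n % N} :=
        SAWAux.finite_of_length_prop hdegf _ (fun p hp => hp.2)
      refine le_trans (Nat.card_le_card_of_injective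
        (fun a => (⟨a.1, a.2.1, a.2.2.1⟩ : {r : Σ z : V, G.Walk y z //
          r.2.IsPath ∧ r.2.length = n % N}))
        (fun a b h => Subtype.ext (congrArg (fun z : {r : Σ z : V, G.Walk y z //
          r.2.IsPath ∧ r.2.length = n % N} => z.1) h))) ?_
      exact hcrude y (n % N)
    calc sawCount G v n = sawCount G v ((n / N) * N + n % N) := by rw [← hn']
      _ ≤ sawCount G v ((n / N) * N) * Δ ^ (n % N) := by
          rcases Nat.eq_zero_or_pos (n % N) with hr0 | hrpos
          · rw [hr0, Nat.add_zero, pow_zero, Nat.mul_one]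
          · exact SAWAux.split_bound hdegf v ((n / N) * N) (n % N)
              (by have := Nat.mul_le_mul hkpos hN; omega) (Δ ^ (n % N)) hC
      _ ≤ (Δ * ((Δ - 1) ^ N - 1) ^ (n / N)) * Δ ^ (n % N) :=
          Nat.mul_le_mul_right _ (key1 v (n / N) hkpos)
      _ = (Δ * Δ ^ (n % N)) * ((Δ - 1) ^ N - 1) ^ (n / N) := by ring
      _ ≤ Δ ^ N * ((Δ - 1) ^ N - 1) ^ (n / N) := by
          refine Nat.mul_le_mul_right _ ?_
          calc Δ * Δ ^ (n % N) = Δ ^ (n % N + 1) := (pow_succ' _ _).symm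
            _ ≤ Δ ^ N := Nat.pow_le_pow_right (by omega) (by omega)
  -- basic real facts
  have hNR : (0 : ℝ) < (N : ℝ) := by exact_mod_cast (by omega : 0 < N)
  have hMcast : (((Δ - 1) ^ N - 1 : ℕ) : ℝ) = ((Δ : ℝ) - 1) ^ N - 1 := by
    have h1 : ((Δ - 1 : ℕ) : ℝ) = (Δ : ℝ) - 1 := by
      rw [Nat.cast_sub (by omega), Nat.cast_one]
    rw [Nat.cast_sub (by omega), Nat.cast_pow, h1, Nat.cast_one]
  have hMR : (1 : ℝ) ≤ (((Δ - 1) ^ N - 1 : ℕ) : ℝ) := by exact_mod_cast hM1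
  have hMpos : (0 : ℝ) < (((Δ - 1) ^ N - 1 : ℕ) : ℝ) := lt_of_lt_of_le one_pos hMR
  -- part 3
  have part3 : (((Δ : ℝ) - 1) ^ N - 1) ^ (1 / (N : ℝ)) < (Δ : ℝ) - 1 := by
    have hd1 : (2 : ℝ) ≤ (Δ : ℝ) - 1 := by
      have : (3 : ℝ) ≤ (Δ : ℝ) := by exact_mod_cast hΔ
      linarith
    have hLpos : (0 : ℝ) < ((Δ : ℝ) - 1) ^ N - 1 := by
      rw [← hMcast]
      exact hMpos
    have hlt : ((Δ : ℝ) - 1) ^ N - 1 < ((Δ : ℝ) - 1) ^ N := by linarith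
    have h0 : (0 : ℝ) < 1 / (N : ℝ) := by positivity
    calc (((Δ : ℝ) - 1) ^ N - 1) ^ (1 / (N : ℝ))
        < (((Δ : ℝ) - 1) ^ N) ^ (1 / (N : ℝ)) :=
          Real.rpow_lt_rpow (le_of_lt hLpos) hlt h0
      _ = (Δ : ℝ) - 1 := by
          rw [← Real.rpow_natCast ((Δ : ℝ) - 1) N,
            ← Real.rpow_mul (by linarith : (0 : ℝ) ≤ (Δ : ℝ) - 1),
            mul_one_div, div_self (ne_of_gt hNR), Real.rpow_one]
  refine ⟨key1, ?_, part3⟩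
  -- part 2
  intro v
  rw [← hMcast]
  set MR : ℝ := (((Δ - 1) ^ N - 1 : ℕ) : ℝ) with hMRdef
  have hDpos : (0 : ℝ) < (Δ : ℝ) := by exact_mod_cast (by omega : 0 < Δ)
  -- the comparison sequence
  have t1 : Tendsto (fun n : ℕ => ((Δ : ℝ) ^ N) ^ (1 / (n : ℝ))) atTop (𝓝 1) := by
    have hD0 : ((Δ : ℝ) ^ N) ≠ 0 := by positivity
    have hc := (Real.continuousAt_const_rpow (a := (Δ : ℝ) ^ N) (b := 0) hD0)
    have := hc.tendsto.comp tendsto_one_div_atTop_nhds_zero_nat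
    simpa [Real.rpow_zero, Function.comp_def] using this
  have t2exp : Tendsto (fun n : ℕ => ((n / N : ℕ) : ℝ) / (n : ℝ)) atTop
      (𝓝 (1 / (N : ℝ))) := by
    refine tendsto_of_tendsto_of_tendsto_of_le_of_le'
      (g := fun n : ℕ => 1 / (N : ℝ) - 1 / (n : ℝ))
      (h := fun _ : ℕ => 1 / (N : ℝ))
      (by simpa using ((tendsto_const_nhds (x := 1 / (N : ℝ))).sub tendsto_one_div_atTop_nhds_zero_nat))
      tendsto_const_nhds ?_ ?_
    · filter_upwards [eventually_ge_atTop 1] with n hn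
      have hn0 : (0 : ℝ) < (n : ℝ) := by exact_mod_cast (by omega : 0 < n)
      have hfloor : n < (n / N) * N + N := by
        have := Nat.div_add_mod n N
        have := Nat.mod_lt n (show 0 < N by omega)
        have hcomm : N * (n / N) = (n / N) * N := Nat.mul_comm _ _
        omega
      have h2 : (1 : ℝ) / (N : ℝ) ≤ (((n / N : ℕ) : ℝ) + 1) / (n : ℝ) := by
        rw [div_le_div_iff₀ hNR hn0]
        have hcast : (n : ℝ) + 1 ≤ (((n / N : ℕ) : ℝ) + 1) * (N : ℝ) := by
          have h4 : (n : ℕ) + 1 ≤ (n / N) * N + N := by omega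
          have h5 : ((n : ℕ) : ℝ) + 1 ≤ (((n / N) * N + N : ℕ) : ℝ) := by
            exact_mod_cast h4
          push_cast at h5
          linarith
        linarith
      have h3 : (((n / N : ℕ) : ℝ) + 1) / (n : ℝ) - 1 / (n : ℝ)
          = ((n / N : ℕ) : ℝ) / (n : ℝ) := by ring
      linarith
    · filter_upwards [eventually_ge_atTop 1] with n hn
      have hn0 : (0 : ℝ) < (n : ℝ) := by exact_mod_cast (by omega : 0 < n)
      rw [div_le_div_iff₀ hn0 hNR]
      have h4 : (n / N) * N ≤ n := Nat.div_mul_le_self n N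
      have h5 : (((n / N) * N : ℕ) : ℝ) ≤ (n : ℝ) := by exact_mod_cast h4
      push_cast at h5
      linarith
  have t2 : Tendsto (fun n : ℕ => MR ^ (((n / N : ℕ) : ℝ) / (n : ℝ))) atTop
      (𝓝 (MR ^ (1 / (N : ℝ)))) := by
    have hc := (Real.continuousAt_const_rpow (a := MR) (b := 1 / (N : ℝ))
      (ne_of_gt hMpos))
    exact hc.tendsto.comp t2exp
  have th : Tendsto
      (fun n : ℕ => ((Δ : ℝ) ^ N) ^ (1 / (n : ℝ)) * MR ^ (((n / N : ℕ) : ℝ) / (n : ℝ)))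
      atTop (𝓝 (MR ^ (1 / (N : ℝ)))) := by
    simpa using t1.mul t2
  have hev : ∀ᶠ n : ℕ in atTop,
      (sawCount G v n : ℝ) ^ (1 / (n : ℝ)) ≤
        ((Δ : ℝ) ^ N) ^ (1 / (n : ℝ)) * MR ^ (((n / N : ℕ) : ℝ) / (n : ℝ)) := by
    filter_upwards [eventually_ge_atTop N, eventually_ge_atTop 1] with n hnN hn1
    have hn0 : (0 : ℝ) < (n : ℝ) := by exact_mod_cast (by omega : 0 < n)
    have hσ : (sawCount G v n : ℝ) ≤ (Δ : ℝ) ^ N * MR ^ (n / N) := by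
      have h6 := hub v n hnN
      have h7 : ((sawCount G v n : ℕ) : ℝ) ≤
          ((Δ ^ N * ((Δ - 1) ^ N - 1) ^ (n / N) : ℕ) : ℝ) := by exact_mod_cast h6
      push_cast at h7 ⊢
      convert h7 using 2
    have h1 : (sawCount G v n : ℝ) ^ (1 / (n : ℝ)) ≤
        ((Δ : ℝ) ^ N * MR ^ (n / N)) ^ (1 / (n : ℝ)) :=
      Real.rpow_le_rpow (Nat.cast_nonneg _) hσ (by positivity)
    refine le_trans h1 (le_of_eq ?_)
    rw [Real.mul_rpow (by positivity) (by positivity)]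
    congr 1
    rw [← Real.rpow_natCast MR (n / N), ← Real.rpow_mul (le_of_lt hMpos),
      mul_one_div]
  refine le_trans (Filter.limsup_le_limsup hev ?_ ?_) (le_of_eq th.limsup_eq)
  · exact Filter.isCoboundedUnder_le_of_le atTop
      (fun n => Real.rpow_nonneg (Nat.cast_nonneg _) _)
  · exact th.isBoundedUnder_le
end
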